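/- arXiv:1711.07519 — 2 statements merged into one kernel-verified Lean document; each statement's English description precedes it below -/
import Mathlib

section
/- Let f : ℝ² → ℍ be measurable with e^{π|x|²} f ∈ L¹(ℝ²,ℍ) + L^∞(ℝ²,ℍ). Then the two-sided quaternion Fourier transform of f extends to an entire function on ℂ² satisfying |ℱ{f}(z)| ≤ K e^{π|z|²} for some constant K > 0, where |z|² = |Re z|² + |Im z|² is the squared Euclidean norm on ℂ². -/
open MeasureTheory Real

noncomputable section

def QI : Quaternion ℝ := ⟨0,1,0,0⟩
def QJ : Quaternion ℝ := ⟨0,0,1,0⟩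
def QK : Quaternion ℝ := ⟨0,0,0,1⟩

/-- `e^{uθ} = cos θ + u sin θ` for a quaternion imaginary unit `u`. -/
def qexp (u : Quaternion ℝ) (θ : ℝ) : Quaternion ℝ :=
  (Real.cos θ) • (1 : Quaternion ℝ) + (Real.sin θ) • u

/-- Two-sided quaternion Fourier transform. -/
def QFT (f : ℝ × ℝ → Quaternion ℝ) (ξ : ℝ × ℝ) : Quaternion ℝ :=
  ∫ x : ℝ × ℝ, qexp QI (-(2 * π * ξ.1 * x.1)) * f x * qexp QJ (-(2 * π * ξ.2 * x.2))

/-- `log⁺ x = max (log x) 0`. -/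
def posLog (x : ℝ) : ℝ := max (Real.log x) 0

/-! ### Auxiliary definitions -/

def sg : Bool → ℝ | true => 1 | false => -1

lemma sg_abs (b : Bool) : |sg b| = 1 := by cases b <;> norm_num [sg]

def kv (q : Quaternion ℝ) (e1 e2 : ℝ) : Fin 4 → ℂ :=
  ![ (((q.re - e1*e2*q.imK)/4 : ℝ) : ℂ) + (((e2*q.imJ + e1*q.imI)/4 : ℝ) : ℂ) * Complex.I,
     (((q.imI + e1*e2*q.imJ)/4 : ℝ) : ℂ) + (((e2*q.imK - e1*q.re)/4 : ℝ) : ℂ) * Complex.I,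
     (((q.imJ + e1*e2*q.imI)/4 : ℝ) : ℂ) + (((e1*q.imK - e2*q.re)/4 : ℝ) : ℂ) * Complex.I,
     (((q.imK - e1*e2*q.re)/4 : ℝ) : ℂ) + (((-(e2*q.imI) - e1*q.imJ)/4 : ℝ) : ℂ) * Complex.I ]

def lmc (c1 c2 : ℂ) : (ℂ × ℂ) →L[ℂ] ℂ :=
  c1 • (ContinuousLinearMap.fst ℂ ℂ ℂ) + c2 • (ContinuousLinearMap.snd ℂ ℂ ℂ)

lemma lmc_apply (c1 c2 : ℂ) (z : ℂ × ℂ) : lmc c1 c2 z = c1 * z.1 + c2 * z.2 := rfl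

def cA (b : Bool) (t : ℝ) : ℂ := ((-(2*π*t) * sg b : ℝ) : ℂ) * Complex.I

def Gk (f : ℝ × ℝ → Quaternion ℝ) (z : ℂ × ℂ) (x : ℝ × ℝ) : Fin 4 → ℂ :=
  ∑ s : Bool × Bool, Complex.exp (lmc (cA s.1 x.1) (cA s.2 x.2) z) • kv (f x) (sg s.1) (sg s.2)

def Gk' (f : ℝ × ℝ → Quaternion ℝ) (z : ℂ × ℂ) (x : ℝ × ℝ) : (ℂ × ℂ) →L[ℂ] (Fin 4 → ℂ) :=
  ∑ s : Bool × Bool, ((Complex.exp (lmc (cA s.1 x.1) (cA s.2 x.2) z)) •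
    lmc (cA s.1 x.1) (cA s.2 x.2)).smulRight (kv (f x) (sg s.1) (sg s.2))

def Tq (q : Quaternion ℝ) : Fin 4 → ℂ := ![(q.re:ℂ), (q.imI:ℂ), (q.imJ:ℂ), (q.imK:ℂ)]

/-! ### The matching lemma on real points -/

lemma eulerA (b : Bool) (t u : ℝ) :
    Complex.exp (cA b t * (u:ℂ)) =
      ((Real.cos (2*π*t*u) : ℝ) : ℂ) - ((sg b : ℝ) : ℂ) * ((Real.sin (2*π*t*u) : ℝ) : ℂ) * Complex.I := by
  have h : cA b t * (u:ℂ) = ((sg b * (-(2*π*t*u)) : ℝ) : ℂ) * Complex.I := by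
    simp only [cA]; push_cast; ring
  rw [h, Complex.exp_mul_I, ← Complex.ofReal_cos, ← Complex.ofReal_sin]
  cases b
  · rw [show sg false * -(2*π*t*u) = 2*π*t*u by norm_num [sg]]
    simp [sg]
  · rw [show sg true * -(2*π*t*u) = -(2*π*t*u) by norm_num [sg]]
    rw [Real.cos_neg, Real.sin_neg]
    simp [sg]
    try ring

set_option maxHeartbeats 1000000 in
lemma matching (f : ℝ × ℝ → Quaternion ℝ) (ξ x : ℝ × ℝ) :
    Gk f ((ξ.1:ℂ), (ξ.2:ℂ)) x =
      Tq (qexp QI (-(2 * π * ξ.1 * x.1)) * f x * qexp QJ (-(2 * π * ξ.2 * x.2))) := by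
  funext i
  simp only [Gk, Fintype.sum_prod_type, Fintype.sum_bool, Finset.sum_apply, Pi.smul_apply,
    lmc_apply, Complex.exp_add, eulerA, smul_eq_mul]
  fin_cases i <;>
  · simp [Tq, -Complex.ofReal_cos, -Complex.ofReal_sin, QuaternionAlgebra.re_one, QuaternionAlgebra.imI_one, QuaternionAlgebra.imJ_one, QuaternionAlgebra.imK_one, QuaternionAlgebra.re_smul, QuaternionAlgebra.imI_smul, QuaternionAlgebra.imJ_smul, QuaternionAlgebra.imK_smul, QuaternionAlgebra.smul_mk, kv, sg, qexp, show QI.re = 0 from rfl, show QI.imI = 1 from rfl, show QI.imJ = 0 from rfl, show QI.imK = 0 from rfl, show QJ.re = 0 from rfl, show QJ.imI = 0 from rfl, show QJ.imJ = 1 from rfl, show QJ.imK = 0 from rfl,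
      Quaternion.re_mul, Quaternion.imI_mul, Quaternion.imJ_mul, Quaternion.imK_mul,
      Quaternion.re_add, Quaternion.imI_add, Quaternion.imJ_add, Quaternion.imK_add,
      Quaternion.re_smul, Quaternion.imI_smul, Quaternion.imJ_smul, Quaternion.imK_smul,
      Quaternion.re_one, Quaternion.imI_one, Quaternion.imJ_one, Quaternion.imK_one,
      Complex.ext_iff, Complex.add_re, Complex.add_im, Complex.sub_re, Complex.sub_im,
      Complex.mul_re, Complex.mul_im, Real.cos_neg, Real.sin_neg]
    constructor <;> ring_nf

/-! ### Scalar estimates -/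

lemma mul_abs_le' (c δ t : ℝ) (hδ : 0 < δ) : c * |t| ≤ c^2/(4*δ) + δ*t^2 := by
  have h4 : (0:ℝ) < 4*δ := by positivity
  rw [← sub_le_iff_le_add]
  rw [le_div_iff₀ h4]
  rcases abs_cases t with ⟨h, _⟩ | ⟨h, _⟩ <;> rw [h] <;>
    nlinarith [sq_nonneg (2*δ*t - c), sq_nonneg (2*δ*t + c)]

def gau (c t : ℝ) : ℝ := Real.exp (c * |t| - π * t^2)

lemma gau_pos (c t : ℝ) : 0 < gau c t := Real.exp_pos _
lemma gau_nonneg (c t : ℝ) : 0 ≤ gau c t := (gau_pos c t).le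

lemma gau_cont (c : ℝ) : Continuous (gau c) := by
  unfold gau; fun_prop

lemma gau_le (c : ℝ) (t : ℝ) : gau c t ≤ Real.exp (c^2/(4*π)) := by
  have h := mul_abs_le' c π t Real.pi_pos
  exact Real.exp_le_exp.2 (by linarith)

lemma gau_le' (c : ℝ) (t : ℝ) : gau c t ≤ Real.exp (c^2/(2*π)) * Real.exp (-(π/2) * t^2) := by
  have h := mul_abs_le' c (π/2) t (by positivity)
  rw [show 4*(π/2) = 2*π by ring] at h
  rw [gau, ← Real.exp_add]
  exact Real.exp_le_exp.2 (by linarith)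

lemma gau_mono (c c' t : ℝ) (h : c ≤ c') : gau c t ≤ gau c' t := by
  apply Real.exp_le_exp.2
  have := mul_le_mul_of_nonneg_right h (abs_nonneg t)
  linarith

lemma gau_int (c : ℝ) : Integrable (gau c) := by
  refine Integrable.mono' (((integrable_exp_neg_mul_sq (by positivity : (0:ℝ) < π/2)).const_mul
    (Real.exp (c^2/(2*π))))) ((gau_cont c).aestronglyMeasurable) ?_
  filter_upwards with t
  rw [Real.norm_eq_abs, abs_of_nonneg (gau_nonneg c t)]
  simpa [neg_mul] using gau_le' c t

lemma gau_integral_le (b : ℝ) (hb : 0 ≤ b) :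
    ∫ t : ℝ, gau (2*π*b) t ≤ 2 * Real.exp (π * b^2) := by
  have hπ := Real.pi_pos
  have heq : ∀ t : ℝ, gau (2*π*b) t = Real.exp (π * b^2) * Real.exp (-π * (|t| - b)^2) := by
    intro t; rw [gau, ← Real.exp_add]; congr 1; rw [← sq_abs t]; ring
  have hint : Integrable (fun s : ℝ => Real.exp (-π * (s - b)^2)) :=
    (integrable_exp_neg_mul_sq hπ).comp_sub_right b
  have h1 : ∫ t : ℝ, Real.exp (-π * (|t| - b)^2)
      = 2 * ∫ t in Set.Ioi (0:ℝ), Real.exp (-π * (t - b)^2) :=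
    integral_comp_abs (f := fun s => Real.exp (-π * (s - b)^2))
  have h2 : ∫ t in Set.Ioi (0:ℝ), Real.exp (-π * (t - b)^2)
      ≤ ∫ t : ℝ, Real.exp (-π * (t - b)^2) :=
    setIntegral_le_integral hint (by filter_upwards with t using (Real.exp_pos _).le)
  have h3 : ∫ t : ℝ, Real.exp (-π * (t - b)^2) = 1 := by
    rw [integral_sub_right_eq_self (fun s => Real.exp (-π * s^2)) b]
    have := integral_gaussian π
    rw [div_self hπ.ne', Real.sqrt_one] at this
    exact this
  calc ∫ t : ℝ, gau (2*π*b) t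
      = Real.exp (π * b^2) * ∫ t : ℝ, Real.exp (-π * (|t| - b)^2) := by
        rw [← integral_const_mul]
        exact integral_congr_ae (Filter.Eventually.of_forall fun t => heq t)
    _ ≤ Real.exp (π * b^2) * 2 := by
        rw [h1]
        have := h2.trans h3.le
        nlinarith [Real.exp_pos (π * b^2)]
    _ = 2 * Real.exp (π * b^2) := by ring

/-! ### Norm estimates -/

lemma q_re_le (q : Quaternion ℝ) : |q.re| ≤ ‖q‖ := by
  have h := Quaternion.normSq_eq_norm_mul_self q
  rw [Quaternion.normSq_def'] at h
  nlinarith [abs_nonneg q.re, norm_nonneg q, sq_abs q.re, sq_nonneg q.imI, sq_nonneg q.imJ,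
    sq_nonneg q.imK]

lemma q_imI_le (q : Quaternion ℝ) : |q.imI| ≤ ‖q‖ := by
  have h := Quaternion.normSq_eq_norm_mul_self q
  rw [Quaternion.normSq_def'] at h
  nlinarith [abs_nonneg q.imI, norm_nonneg q, sq_abs q.imI, sq_nonneg q.re, sq_nonneg q.imJ,
    sq_nonneg q.imK]

lemma q_imJ_le (q : Quaternion ℝ) : |q.imJ| ≤ ‖q‖ := by
  have h := Quaternion.normSq_eq_norm_mul_self q
  rw [Quaternion.normSq_def'] at h
  nlinarith [abs_nonneg q.imJ, norm_nonneg q, sq_abs q.imJ, sq_nonneg q.re, sq_nonneg q.imI,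
    sq_nonneg q.imK]

lemma q_imK_le (q : Quaternion ℝ) : |q.imK| ≤ ‖q‖ := by
  have h := Quaternion.normSq_eq_norm_mul_self q
  rw [Quaternion.normSq_def'] at h
  nlinarith [abs_nonneg q.imK, norm_nonneg q, sq_abs q.imK, sq_nonneg q.re, sq_nonneg q.imI,
    sq_nonneg q.imJ]

lemma cnorm (p r : ℝ) : ‖(((p/4 : ℝ) : ℂ) + ((r/4 : ℝ) : ℂ) * Complex.I)‖ ≤ (|p| + |r|)/4 := by
  calc ‖(((p/4 : ℝ) : ℂ) + ((r/4 : ℝ) : ℂ) * Complex.I)‖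
      ≤ ‖((p/4 : ℝ) : ℂ)‖ + ‖((r/4 : ℝ) : ℂ) * Complex.I‖ := norm_add_le _ _
    _ = |p/4| + |r/4| := by
        rw [norm_mul, Complex.norm_I, mul_one, Complex.norm_real, Complex.norm_real,
          Real.norm_eq_abs, Real.norm_eq_abs]
    _ ≤ (|p| + |r|)/4 := by rw [abs_div, abs_div, add_div]; norm_num

lemma kv_le (q : Quaternion ℝ) (s1 s2 : Bool) : ‖kv q (sg s1) (sg s2)‖ ≤ ‖q‖ := by
  have h1 := sg_abs s1; have h2 := sg_abs s2
  have hre := q_re_le q; have himI := q_imI_le q; have himJ := q_imJ_le q; have himK := q_imK_le q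
  rw [pi_norm_le_iff_of_nonneg (norm_nonneg q)]
  intro i
  have habs12 : |sg s1 * sg s2| = 1 := by rw [abs_mul, h1, h2]; norm_num
  fin_cases i <;> simp only [kv, Matrix.cons_val_zero, Matrix.cons_val_one, Matrix.head_cons,
    Matrix.cons_val_two, Matrix.cons_val_three, Matrix.tail_cons, Fin.isValue]
  · refine (cnorm _ _).trans ?_
    have e1 : |q.re - sg s1 * sg s2 * q.imK| ≤ |q.re| + |q.imK| := by
      refine (abs_sub _ _).trans ?_
      rw [abs_mul, habs12, one_mul]
    have e2 : |sg s2 * q.imJ + sg s1 * q.imI| ≤ |q.imJ| + |q.imI| := by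
      refine (abs_add_le _ _).trans ?_
      rw [abs_mul, abs_mul, h1, h2, one_mul, one_mul]
    linarith
  · refine (cnorm _ _).trans ?_
    have e1 : |q.imI + sg s1 * sg s2 * q.imJ| ≤ |q.imI| + |q.imJ| := by
      refine (abs_add_le _ _).trans ?_
      rw [abs_mul, habs12, one_mul]
    have e2 : |sg s2 * q.imK - sg s1 * q.re| ≤ |q.imK| + |q.re| := by
      refine (abs_sub _ _).trans ?_
      rw [abs_mul, abs_mul, h1, h2, one_mul, one_mul]
    linarith
  · refine (cnorm _ _).trans ?_
    have e1 : |q.imJ + sg s1 * sg s2 * q.imI| ≤ |q.imJ| + |q.imI| := by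
      refine (abs_add_le _ _).trans ?_
      rw [abs_mul, habs12, one_mul]
    have e2 : |sg s1 * q.imK - sg s2 * q.re| ≤ |q.imK| + |q.re| := by
      refine (abs_sub _ _).trans ?_
      rw [abs_mul, abs_mul, h1, h2, one_mul, one_mul]
    linarith
  · refine (cnorm _ _).trans ?_
    have e1 : |q.imK - sg s1 * sg s2 * q.re| ≤ |q.imK| + |q.re| := by
      refine (abs_sub _ _).trans ?_
      rw [abs_mul, habs12, one_mul]
    have e2 : |-(sg s2 * q.imI) - sg s1 * q.imJ| ≤ |q.imI| + |q.imJ| := by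
      refine (abs_sub _ _).trans ?_
      rw [abs_neg, abs_mul, abs_mul, h1, h2, one_mul, one_mul]
    linarith

lemma cA_norm (b : Bool) (t : ℝ) : ‖cA b t‖ = 2*π*|t| := by
  have hπ := Real.pi_pos
  rw [cA, norm_mul, Complex.norm_I, mul_one, Complex.norm_real, Real.norm_eq_abs, abs_mul,
    sg_abs, mul_one, abs_neg, abs_mul, abs_mul]
  rw [abs_of_pos hπ, abs_of_pos (by norm_num : (0:ℝ) < 2)]

lemma lmc_norm (c1 c2 : ℂ) : ‖lmc c1 c2‖ ≤ ‖c1‖ + ‖c2‖ := by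
  refine ContinuousLinearMap.opNorm_le_bound _ (by positivity) fun z => ?_
  rw [lmc_apply]
  calc ‖c1 * z.1 + c2 * z.2‖ ≤ ‖c1‖ * ‖z.1‖ + ‖c2‖ * ‖z.2‖ := by
        refine (norm_add_le _ _).trans ?_
        rw [norm_mul, norm_mul]
    _ ≤ ‖c1‖ * ‖z‖ + ‖c2‖ * ‖z‖ := by
        gcongr
        · exact norm_fst_le z
        · exact norm_snd_le z
    _ = (‖c1‖ + ‖c2‖) * ‖z‖ := by ring

lemma mul_le_abs (a m c : ℝ) (h : |m| ≤ c) : a * m ≤ |a| * c := by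
  refine (le_abs_self _).trans ?_
  rw [abs_mul]
  exact mul_le_mul_of_nonneg_left h (abs_nonneg a)

lemma re_cA_mul (b : Bool) (t : ℝ) (w : ℂ) : (cA b t * w).re = 2*π*t * sg b * w.im := by
  simp [cA, Complex.mul_re, Complex.mul_im]
  try ring

lemma exp_lmc_le (s1 s2 : Bool) (t1 t2 : ℝ) (z : ℂ × ℂ) :
    ‖Complex.exp (lmc (cA s1 t1) (cA s2 t2) z)‖ ≤
      Real.exp (2*π*|t1| * ‖z.1‖ + 2*π*|t2| * ‖z.2‖) := by
  have hπ := Real.pi_pos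
  rw [Complex.norm_exp]
  apply Real.exp_le_exp.2
  rw [lmc_apply, Complex.add_re, re_cA_mul, re_cA_mul]
  have h1 : 2*π*t1 * sg s1 * (z.1).im ≤ 2*π*|t1| * ‖z.1‖ := by
    have := mul_le_abs (2*π*t1 * sg s1) (z.1).im ‖z.1‖ (Complex.abs_im_le_norm z.1)
    rwa [abs_mul, sg_abs, mul_one, abs_mul, abs_mul, abs_of_pos hπ,
      abs_of_pos (by norm_num : (0:ℝ) < 2)] at this
  have h2 : 2*π*t2 * sg s2 * (z.2).im ≤ 2*π*|t2| * ‖z.2‖ := by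
    have := mul_le_abs (2*π*t2 * sg s2) (z.2).im ‖z.2‖ (Complex.abs_im_le_norm z.2)
    rwa [abs_mul, sg_abs, mul_one, abs_mul, abs_mul, abs_of_pos hπ,
      abs_of_pos (by norm_num : (0:ℝ) < 2)] at this
  linarith

lemma Gk_le (f : ℝ × ℝ → Quaternion ℝ) (z : ℂ × ℂ) (x : ℝ × ℝ) :
    ‖Gk f z x‖ ≤ 4 * (Real.exp (2*π*|x.1| * ‖z.1‖ + 2*π*|x.2| * ‖z.2‖) * ‖f x‖) := by
  refine (norm_sum_le _ _).trans ?_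
  have h : ∀ s : Bool × Bool,
      ‖Complex.exp (lmc (cA s.1 x.1) (cA s.2 x.2) z) • kv (f x) (sg s.1) (sg s.2)‖ ≤
        Real.exp (2*π*|x.1| * ‖z.1‖ + 2*π*|x.2| * ‖z.2‖) * ‖f x‖ := by
    intro s
    rw [norm_smul]
    exact mul_le_mul (exp_lmc_le s.1 s.2 x.1 x.2 z) (kv_le _ _ _) (norm_nonneg _)
      (Real.exp_pos _).le
  calc ∑ s : Bool × Bool, ‖Complex.exp (lmc (cA s.1 x.1) (cA s.2 x.2) z) •
          kv (f x) (sg s.1) (sg s.2)‖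
      ≤ ∑ _s : Bool × Bool, Real.exp (2*π*|x.1| * ‖z.1‖ + 2*π*|x.2| * ‖z.2‖) * ‖f x‖ :=
        Finset.sum_le_sum fun s _ => h s
    _ = 4 * (Real.exp (2*π*|x.1| * ‖z.1‖ + 2*π*|x.2| * ‖z.2‖) * ‖f x‖) := by
        rw [Finset.sum_const]
        simp
        try ring

lemma Gk'_le (f : ℝ × ℝ → Quaternion ℝ) (z : ℂ × ℂ) (x : ℝ × ℝ) :
    ‖Gk' f z x‖ ≤ 4 * (Real.exp (2*π*|x.1| * ‖z.1‖ + 2*π*|x.2| * ‖z.2‖) *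
      ((2*π*|x.1| + 2*π*|x.2|) * ‖f x‖)) := by
  refine (norm_sum_le _ _).trans ?_
  have h : ∀ s : Bool × Bool,
      ‖((Complex.exp (lmc (cA s.1 x.1) (cA s.2 x.2) z)) •
        lmc (cA s.1 x.1) (cA s.2 x.2)).smulRight (kv (f x) (sg s.1) (sg s.2))‖ ≤
        Real.exp (2*π*|x.1| * ‖z.1‖ + 2*π*|x.2| * ‖z.2‖) * ((2*π*|x.1| + 2*π*|x.2|) * ‖f x‖) := by
    intro s
    rw [ContinuousLinearMap.norm_smulRight_apply, norm_smul]
    have hL : ‖lmc (cA s.1 x.1) (cA s.2 x.2)‖ ≤ 2*π*|x.1| + 2*π*|x.2| := by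
      refine (lmc_norm _ _).trans ?_
      rw [cA_norm, cA_norm]
    rw [mul_assoc]
    refine mul_le_mul (exp_lmc_le s.1 s.2 x.1 x.2 z) ?_ (by positivity) (Real.exp_pos _).le
    exact mul_le_mul hL (kv_le _ _ _) (norm_nonneg _) (by positivity)
  calc ∑ s : Bool × Bool, ‖((Complex.exp (lmc (cA s.1 x.1) (cA s.2 x.2) z)) •
          lmc (cA s.1 x.1) (cA s.2 x.2)).smulRight (kv (f x) (sg s.1) (sg s.2))‖
      ≤ ∑ _s : Bool × Bool, Real.exp (2*π*|x.1| * ‖z.1‖ + 2*π*|x.2| * ‖z.2‖) *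
          ((2*π*|x.1| + 2*π*|x.2|) * ‖f x‖) := Finset.sum_le_sum fun s _ => h s
    _ = 4 * (Real.exp (2*π*|x.1| * ‖z.1‖ + 2*π*|x.2| * ‖z.2‖) *
          ((2*π*|x.1| + 2*π*|x.2|) * ‖f x‖)) := by
        rw [Finset.sum_const]
        simp
        try ring

/-! ### Continuity / measurability -/

lemma cA_cont (b : Bool) : Continuous fun t : ℝ => cA b t := by
  unfold cA; fun_prop

lemma kv_cont (e1 e2 : ℝ) : Continuous fun q : Quaternion ℝ => kv q e1 e2 := by
  apply continuous_pi; intro i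
  have hre := Quaternion.continuous_re
  have himI := Quaternion.continuous_imI
  have himJ := Quaternion.continuous_imJ
  have himK := Quaternion.continuous_imK
  fin_cases i <;>
  · simp [kv]
    fun_prop

lemma qexp_cont (u : Quaternion ℝ) : Continuous fun θ : ℝ => qexp u θ := by
  unfold qexp; fun_prop

set_option maxHeartbeats 1000000 in
lemma hasDeriv_term (f : ℝ × ℝ → Quaternion ℝ) (x : ℝ × ℝ) (z : ℂ × ℂ) :
    HasFDerivAt (fun w => Gk f w x) (Gk' f z x) z := by
  simp only [Gk, Gk']
  apply HasFDerivAt.fun_sum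
  intro s _
  exact ((lmc (cA s.1 x.1) (cA s.2 x.2)).hasFDerivAt.cexp).smul_const _

lemma Gk_aesm (f : ℝ × ℝ → Quaternion ℝ) (hmeas : AEStronglyMeasurable f volume) (z : ℂ × ℂ) :
    AEStronglyMeasurable (fun x => Gk f z x) volume := by
  have hxf : AEStronglyMeasurable (fun x : ℝ × ℝ => (x, f x)) volume :=
    aestronglyMeasurable_id.prodMk hmeas
  have hc : Continuous fun p : (ℝ × ℝ) × Quaternion ℝ =>
      ∑ s : Bool × Bool, Complex.exp (lmc (cA s.1 p.1.1) (cA s.2 p.1.2) z) •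
        kv p.2 (sg s.1) (sg s.2) := by
    apply continuous_finset_sum; intro s _
    refine Continuous.smul (Complex.continuous_exp.comp ?_) ((kv_cont _ _).comp continuous_snd)
    show Continuous fun p : (ℝ × ℝ) × Quaternion ℝ =>
      cA s.1 p.1.1 * z.1 + cA s.2 p.1.2 * z.2
    exact (((cA_cont s.1).comp (continuous_fst.comp continuous_fst)).mul continuous_const).add
      (((cA_cont s.2).comp (continuous_snd.comp continuous_fst)).mul continuous_const)
  have h2 := hc.comp_aestronglyMeasurable hxf
  exact h2.congr (Filter.Eventually.of_forall fun x => by simp [Gk])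

lemma Gk'_aesm (f : ℝ × ℝ → Quaternion ℝ) (hmeas : AEStronglyMeasurable f volume) (z : ℂ × ℂ) :
    AEStronglyMeasurable (fun x => Gk' f z x) volume := by
  have hxf : AEStronglyMeasurable (fun x : ℝ × ℝ => (x, f x)) volume :=
    aestronglyMeasurable_id.prodMk hmeas
  have hc : Continuous fun p : (ℝ × ℝ) × Quaternion ℝ =>
      ∑ s : Bool × Bool, ((Complex.exp (lmc (cA s.1 p.1.1) (cA s.2 p.1.2) z)) •
        lmc (cA s.1 p.1.1) (cA s.2 p.1.2)).smulRight (kv p.2 (sg s.1) (sg s.2)) := by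
    apply continuous_finset_sum; intro s _
    have hlmc : Continuous fun p : (ℝ × ℝ) × Quaternion ℝ =>
        lmc (cA s.1 p.1.1) (cA s.2 p.1.2) := by
      unfold lmc
      exact (((cA_cont s.1).comp (continuous_fst.comp continuous_fst)).smul
        continuous_const).add (((cA_cont s.2).comp (continuous_snd.comp
          continuous_fst)).smul continuous_const)
    have hexparg : Continuous fun p : (ℝ × ℝ) × Quaternion ℝ =>
        lmc (cA s.1 p.1.1) (cA s.2 p.1.2) z := hlmc.clm_apply continuous_const
    have hA : Continuous fun p : (ℝ × ℝ) × Quaternion ℝ =>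
        (Complex.exp (lmc (cA s.1 p.1.1) (cA s.2 p.1.2) z)) •
          lmc (cA s.1 p.1.1) (cA s.2 p.1.2) :=
      (Complex.continuous_exp.comp hexparg).smul hlmc
    have hB : Continuous fun p : (ℝ × ℝ) × Quaternion ℝ => kv p.2 (sg s.1) (sg s.2) :=
      (kv_cont _ _).comp continuous_snd
    exact (((ContinuousLinearMap.smulRightL ℂ (ℂ × ℂ) (Fin 4 → ℂ)).continuous.comp hA).clm_apply hB)
  have h2 := hc.comp_aestronglyMeasurable hxf
  exact h2.congr (Filter.Eventually.of_forall fun x => by simp [Gk'])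

/-! ### The quaternionic side -/

lemma QI_norm : ‖QI‖ = 1 := by
  have h := Quaternion.normSq_eq_norm_mul_self QI
  rw [Quaternion.normSq_def'] at h
  simp only [show QI.re = 0 from rfl, show QI.imI = 1 from rfl, show QI.imJ = 0 from rfl,
    show QI.imK = 0 from rfl] at h
  nlinarith [norm_nonneg QI]

lemma QJ_norm : ‖QJ‖ = 1 := by
  have h := Quaternion.normSq_eq_norm_mul_self QJ
  rw [Quaternion.normSq_def'] at h
  simp only [show QJ.re = 0 from rfl, show QJ.imI = 0 from rfl, show QJ.imJ = 1 from rfl,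
    show QJ.imK = 0 from rfl] at h
  nlinarith [norm_nonneg QJ]

lemma qexp_norm_le (u : Quaternion ℝ) (θ : ℝ) : ‖qexp u θ‖ ≤ 1 + ‖u‖ := by
  unfold qexp
  refine (norm_add_le _ _).trans ?_
  rw [norm_smul, norm_smul, norm_one, Real.norm_eq_abs, Real.norm_eq_abs, mul_one]
  have h1 := Real.abs_cos_le_one θ
  have h2 := Real.abs_sin_le_one θ
  nlinarith [norm_nonneg u, abs_nonneg (Real.sin θ)]

def Tlin : Quaternion ℝ →L[ℝ] (Fin 4 → ℂ) :=
  LinearMap.toContinuousLinearMap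
    { toFun := fun q => ![(q.re:ℂ), (q.imI:ℂ), (q.imJ:ℂ), (q.imK:ℂ)]
      map_add' := fun a b => by
        funext i; fin_cases i <;> simp
      map_smul' := fun r a => by
        funext i; fin_cases i <;> simp [Complex.real_smul] }

lemma Tlin_eq (q : Quaternion ℝ) : Tlin q = Tq q := rfl

/-! ### Main theorem -/

set_option maxHeartbeats 2000000 in
theorem qft_entire_extension (f : ℝ × ℝ → Quaternion ℝ)
    (hmeas : AEStronglyMeasurable f volume)
    (hdecomp : ∃ u v : ℝ × ℝ → Quaternion ℝ, Integrable u ∧ MemLp v ⊤ ∧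
      ∀ x : ℝ × ℝ, Real.exp (π * (x.1 ^ 2 + x.2 ^ 2)) • f x = u x + v x) :
    ∃ K : ℝ, 0 < K ∧ ∃ F : ℂ × ℂ → (Fin 4 → ℂ), Differentiable ℂ F ∧
      (∀ ξ : ℝ × ℝ, F ((ξ.1 : ℂ), (ξ.2 : ℂ)) =
        ![(((QFT f ξ).re : ℝ) : ℂ), (((QFT f ξ).imI : ℝ) : ℂ),
          (((QFT f ξ).imJ : ℝ) : ℂ), (((QFT f ξ).imK : ℝ) : ℂ)]) ∧
      ∀ z : ℂ × ℂ, Real.sqrt (∑ i : Fin 4, ‖F z i‖ ^ 2) ≤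
        K * Real.exp (π * (‖z.1‖ ^ 2 + ‖z.2‖ ^ 2)) := by
  obtain ⟨u, v, hu, hv, hsum⟩ := hdecomp
  have hπ := Real.pi_pos
  set M : ℝ := (eLpNorm v ⊤ volume).toReal with hMdef
  have hM0 : 0 ≤ M := ENNReal.toReal_nonneg
  have hvae : ∀ᵐ x : ℝ × ℝ ∂volume, ‖v x‖ ≤ M := by
    have h1 := enorm_ae_le_eLpNormEssSup v (volume : Measure (ℝ × ℝ))
    have hfin : eLpNormEssSup v (volume : Measure (ℝ × ℝ)) ≠ ⊤ := by
      have h2 := hv.2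
      rw [eLpNorm_exponent_top] at h2
      exact h2.ne
    filter_upwards [h1] with x hx
    have h3 := ENNReal.toReal_mono hfin hx
    rw [toReal_enorm] at h3
    rw [hMdef, eLpNorm_exponent_top]
    exact h3
  -- pointwise decay of f
  have hf_pt : ∀ x : ℝ × ℝ, ‖f x‖ ≤ Real.exp (-(π * (x.1^2 + x.2^2))) * (‖u x‖ + ‖v x‖) := by
    intro x
    have h1 : Real.exp (π * (x.1^2+x.2^2)) * ‖f x‖ ≤ ‖u x‖ + ‖v x‖ := by
      calc Real.exp (π * (x.1^2+x.2^2)) * ‖f x‖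
          = ‖Real.exp (π * (x.1^2+x.2^2)) • f x‖ := by
            rw [norm_smul, Real.norm_eq_abs, abs_of_pos (Real.exp_pos _)]
        _ = ‖u x + v x‖ := by rw [hsum x]
        _ ≤ ‖u x‖ + ‖v x‖ := norm_add_le _ _
    have h2 := mul_le_mul_of_nonneg_left h1 (Real.exp_pos (-(π * (x.1^2+x.2^2)))).le
    rwa [← mul_assoc, ← Real.exp_add,
      show -(π * (x.1^2+x.2^2)) + π * (x.1^2+x.2^2) = 0 by ring,
      Real.exp_zero, one_mul] at h2
  -- integrability helpers
  have hgg : ∀ c1 c2 : ℝ, Integrable (fun x : ℝ × ℝ => gau c1 x.1 * gau c2 x.2) volume := by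
    intro c1 c2
    rw [MeasureTheory.Measure.volume_eq_prod]
    exact (gau_int c1).mul_prod (gau_int c2)
  have hggmeas : ∀ c1 c2 : ℝ,
      AEStronglyMeasurable (fun x : ℝ × ℝ => gau c1 x.1 * gau c2 x.2) volume :=
    fun c1 c2 => (((gau_cont c1).comp continuous_fst).mul
      ((gau_cont c2).comp continuous_snd)).aestronglyMeasurable
  have hggu : ∀ c1 c2 : ℝ,
      Integrable (fun x : ℝ × ℝ => gau c1 x.1 * gau c2 x.2 * ‖u x‖) volume := by
    intro c1 c2
    refine Integrable.bdd_mul (c := Real.exp (c1^2/(4*π)) * Real.exp (c2^2/(4*π))) hu.norm (hggmeas c1 c2)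
      (Filter.Eventually.of_forall fun x => ?_)
    rw [Real.norm_eq_abs, abs_of_nonneg (mul_nonneg (gau_nonneg _ _) (gau_nonneg _ _))]
    exact mul_le_mul (gau_le _ _) (gau_le _ _) (gau_nonneg _ _) (Real.exp_pos _).le
  -- the global bound for the candidate F
  have keyF : ∀ z : ℂ × ℂ, ‖∫ x : ℝ × ℝ, Gk f z x‖ ≤
      4 * ((∫ x : ℝ × ℝ, ‖u x‖) + 4*M) * Real.exp (π * (‖z.1‖^2 + ‖z.2‖^2)) := by
    intro z
    have hb1 : (0:ℝ) ≤ ‖z.1‖ := norm_nonneg _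
    have hb2 : (0:ℝ) ≤ ‖z.2‖ := norm_nonneg _
    set A := fun x : ℝ × ℝ => gau (2*π*‖z.1‖) x.1 * gau (2*π*‖z.2‖) x.2 * ‖u x‖ with hAdef
    set B := fun x : ℝ × ℝ => gau (2*π*‖z.1‖) x.1 * gau (2*π*‖z.2‖) x.2 with hBdef
    have hA : Integrable A volume := hggu _ _
    have hB : Integrable B volume := hgg _ _
    have hgint : Integrable (fun x => 4 * A x + (4*M) * B x) volume :=
      (hA.const_mul 4).add (hB.const_mul (4*M))
    have hae : ∀ᵐ x : ℝ × ℝ ∂volume, ‖Gk f z x‖ ≤ 4 * A x + (4*M) * B x := by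
      filter_upwards [hvae] with x hvx
      have h1 := Gk_le f z x
      have hE : Real.exp (2*π*|x.1| * ‖z.1‖ + 2*π*|x.2| * ‖z.2‖) *
          Real.exp (-(π * (x.1^2 + x.2^2))) = B x := by
        rw [hBdef]
        simp only [gau, ← Real.exp_add]
        congr 1; ring
      have hBnn : 0 ≤ B x := mul_nonneg (gau_nonneg _ _) (gau_nonneg _ _)
      calc ‖Gk f z x‖ ≤ 4 * (Real.exp (2*π*|x.1| * ‖z.1‖ + 2*π*|x.2| * ‖z.2‖) * ‖f x‖) := h1
        _ ≤ 4 * (Real.exp (2*π*|x.1| * ‖z.1‖ + 2*π*|x.2| * ‖z.2‖) *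
            (Real.exp (-(π * (x.1^2+x.2^2))) * (‖u x‖ + ‖v x‖))) := by
            have := hf_pt x
            gcongr
        _ = 4 * (B x * (‖u x‖ + ‖v x‖)) := by rw [← hE]; ring
        _ ≤ 4 * (B x * (‖u x‖ + M)) := by gcongr
        _ = 4 * A x + (4*M) * B x := by rw [hAdef]; ring
    have hnorm := norm_integral_le_of_norm_le hgint hae
    have g1 : ∀ b t, 0 ≤ b → gau (2*π*b) t ≤ Real.exp (π*b^2) := by
      intro b t hb
      have h := gau_le (2*π*b) t
      rwa [show (2*π*b)^2/(4*π) = π*b^2 by rw [div_eq_iff (by positivity : (4:ℝ)*π ≠ 0)]; ring]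
        at h
    have hintA : ∫ x : ℝ × ℝ, A x ≤
        Real.exp (π*‖z.1‖^2) * Real.exp (π*‖z.2‖^2) * ∫ x : ℝ × ℝ, ‖u x‖ := by
      rw [← integral_const_mul]
      refine integral_mono hA (hu.norm.const_mul _) fun x => ?_
      rw [hAdef]
      exact mul_le_mul (mul_le_mul (g1 ‖z.1‖ x.1 hb1) (g1 ‖z.2‖ x.2 hb2) (gau_nonneg _ _)
        (Real.exp_pos _).le) (le_refl ‖u x‖) (norm_nonneg _) (by positivity)
    have hintB : ∫ x : ℝ × ℝ, B x ≤ (2*Real.exp (π*‖z.1‖^2)) * (2*Real.exp (π*‖z.2‖^2)) := by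
      have hBeq : ∫ x : ℝ × ℝ, B x
          = (∫ t : ℝ, gau (2*π*‖z.1‖) t) * (∫ t : ℝ, gau (2*π*‖z.2‖) t) := by
        rw [hBdef, MeasureTheory.Measure.volume_eq_prod]
        exact integral_prod_mul _ _
      rw [hBeq]
      exact mul_le_mul (gau_integral_le _ hb1) (gau_integral_le _ hb2)
        (integral_nonneg fun t => gau_nonneg _ _) (by positivity)
    have hsplit : ∫ x : ℝ × ℝ, (4 * A x + (4*M) * B x)
        = 4 * (∫ x : ℝ × ℝ, A x) + (4*M) * ∫ x : ℝ × ℝ, B x := by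
      rw [integral_add (hA.const_mul 4) (hB.const_mul (4*M)), integral_const_mul,
        integral_const_mul]
    have hu0 : (0:ℝ) ≤ ∫ x : ℝ × ℝ, ‖u x‖ := integral_nonneg fun x => norm_nonneg _
    calc ‖∫ x : ℝ × ℝ, Gk f z x‖ ≤ ∫ x : ℝ × ℝ, (4 * A x + (4*M) * B x) := hnorm
      _ = 4 * (∫ x : ℝ × ℝ, A x) + (4*M) * ∫ x : ℝ × ℝ, B x := hsplit
      _ ≤ 4 * (Real.exp (π*‖z.1‖^2) * Real.exp (π*‖z.2‖^2) * ∫ x : ℝ × ℝ, ‖u x‖)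
          + (4*M) * ((2*Real.exp (π*‖z.1‖^2)) * (2*Real.exp (π*‖z.2‖^2))) := by
          have hMB : (0:ℝ) ≤ 4*M := by linarith
          exact add_le_add (mul_le_mul_of_nonneg_left hintA (by norm_num))
            (mul_le_mul_of_nonneg_left hintB hMB)
      _ = 4 * ((∫ x : ℝ × ℝ, ‖u x‖) + 4*M) * Real.exp (π * (‖z.1‖^2 + ‖z.2‖^2)) := by
          rw [show π * (‖z.1‖^2 + ‖z.2‖^2) = π*‖z.1‖^2 + π*‖z.2‖^2 by ring, Real.exp_add]
          ring
  -- differentiability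
  have hdiff : ∀ z₀ : ℂ × ℂ, HasFDerivAt (fun z => ∫ x : ℝ × ℝ, Gk f z x)
      (∫ x : ℝ × ℝ, Gk' f z₀ x) z₀ := by
    intro z₀
    have hBd : (0:ℝ) ≤ ‖z₀‖ + 1 := by positivity
    set c : ℝ := 2*π*(‖z₀‖+1) + 1 with hcdef
    set D : (ℝ × ℝ) → ℝ := fun x => (8*π) * (gau c x.1 * gau c x.2 * ‖u x‖)
      + (8*π*M) * (gau c x.1 * gau c x.2) with hDdef
    have hD : Integrable D volume := ((hggu c c).const_mul _).add ((hgg c c).const_mul _)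
    -- uniform bound over the ball
    have hball : ∀ z : ℂ × ℂ, z ∈ Metric.ball z₀ 1 → ‖z.1‖ ≤ ‖z₀‖+1 ∧ ‖z.2‖ ≤ ‖z₀‖+1 := by
      intro z hz
      rw [Metric.mem_ball, dist_eq_norm] at hz
      have hzn : ‖z‖ ≤ ‖z₀‖ + 1 := by
        calc ‖z‖ = ‖z₀ + (z - z₀)‖ := by ring_nf
          _ ≤ ‖z₀‖ + ‖z - z₀‖ := norm_add_le _ _
          _ ≤ ‖z₀‖ + 1 := by linarith
      exact ⟨(norm_fst_le z).trans hzn, (norm_snd_le z).trans hzn⟩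
    have hprod : ∀ x : ℝ × ℝ,
        Real.exp (2*π*|x.1| * (‖z₀‖+1) + 2*π*|x.2| * (‖z₀‖+1)) *
          (Real.exp |x.1| * Real.exp |x.2|) * Real.exp (-(π * (x.1^2+x.2^2)))
        = gau c x.1 * gau c x.2 := by
      intro x
      rw [hcdef]
      simp only [gau, ← Real.exp_add]
      congr 1; ring
    have hboundGk' : ∀ᵐ x : ℝ × ℝ ∂volume, ∀ z ∈ Metric.ball z₀ 1, ‖Gk' f z x‖ ≤ D x := by
      filter_upwards [hvae] with x hvx
      intro z hz
      obtain ⟨hz1, hz2⟩ := hball z hz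
      have h1 := Gk'_le f z x
      have habs1 : (0:ℝ) ≤ |x.1| := abs_nonneg _
      have habs2 : (0:ℝ) ≤ |x.2| := abs_nonneg _
      have hsum_exp : |x.1| + |x.2| ≤ Real.exp |x.1| * Real.exp |x.2| := by
        rw [← Real.exp_add]
        have := Real.add_one_le_exp (|x.1| + |x.2|)
        linarith
      calc ‖Gk' f z x‖
          ≤ 4 * (Real.exp (2*π*|x.1| * ‖z.1‖ + 2*π*|x.2| * ‖z.2‖) *
              ((2*π*|x.1| + 2*π*|x.2|) * ‖f x‖)) := h1
        _ ≤ 4 * (Real.exp (2*π*|x.1| * (‖z₀‖+1) + 2*π*|x.2| * (‖z₀‖+1)) *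
              ((2*π*(Real.exp |x.1| * Real.exp |x.2|)) *
                (Real.exp (-(π * (x.1^2+x.2^2))) * (‖u x‖ + M)))) := by
            have hfx : ‖f x‖ ≤ Real.exp (-(π * (x.1^2+x.2^2))) * (‖u x‖ + M) := by
              refine (hf_pt x).trans ?_
              gcongr
            have h2π : 2*π*|x.1| + 2*π*|x.2| ≤ 2*π*(Real.exp |x.1| * Real.exp |x.2|) := by
              nlinarith
            refine mul_le_mul_of_nonneg_left ?_ (by norm_num : (0:ℝ) ≤ 4)
            refine mul_le_mul (Real.exp_le_exp.2 ?_)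
              (mul_le_mul h2π hfx (norm_nonneg _) (by positivity)) (by positivity)
              (Real.exp_pos _).le
            refine add_le_add (mul_le_mul_of_nonneg_left hz1 (by positivity))
              (mul_le_mul_of_nonneg_left hz2 (by positivity))
        _ = (8*π) * ((Real.exp (2*π*|x.1| * (‖z₀‖+1) + 2*π*|x.2| * (‖z₀‖+1)) *
              (Real.exp |x.1| * Real.exp |x.2|) * Real.exp (-(π * (x.1^2+x.2^2)))) *
                (‖u x‖ + M)) := by ring
        _ = (8*π) * ((gau c x.1 * gau c x.2) * (‖u x‖ + M)) := by rw [hprod x]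
        _ = D x := by rw [hDdef]; ring
    have hboundGk : ∀ᵐ x : ℝ × ℝ ∂volume, ‖Gk f z₀ x‖ ≤ D x := by
      filter_upwards [hvae] with x hvx
      have h1 := Gk_le f z₀ x
      have hone : (1:ℝ) ≤ Real.exp |x.1| * Real.exp |x.2| := by
        rw [← Real.exp_add]
        have := Real.add_one_le_exp (|x.1| + |x.2|)
        have h0 : (0:ℝ) ≤ |x.1| + |x.2| := by positivity
        nlinarith [Real.exp_pos (|x.1| + |x.2|)]
      have hfx : ‖f x‖ ≤ Real.exp (-(π * (x.1^2+x.2^2))) * (‖u x‖ + M) := by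
        refine (hf_pt x).trans ?_
        gcongr
      calc ‖Gk f z₀ x‖
          ≤ 4 * (Real.exp (2*π*|x.1| * ‖z₀.1‖ + 2*π*|x.2| * ‖z₀.2‖) * ‖f x‖) := h1
        _ ≤ 4 * (Real.exp (2*π*|x.1| * (‖z₀‖+1) + 2*π*|x.2| * (‖z₀‖+1)) *
              ((Real.exp |x.1| * Real.exp |x.2|) *
                (Real.exp (-(π * (x.1^2+x.2^2))) * (‖u x‖ + M)))) := by
            have hz1 : ‖z₀.1‖ ≤ ‖z₀‖+1 := (norm_fst_le z₀).trans (by linarith)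
            have hz2 : ‖z₀.2‖ ≤ ‖z₀‖+1 := (norm_snd_le z₀).trans (by linarith)
            have hWnn : (0:ℝ) ≤ Real.exp (-(π * (x.1^2+x.2^2))) * (‖u x‖ + M) := by positivity
            refine mul_le_mul_of_nonneg_left ?_ (by norm_num : (0:ℝ) ≤ 4)
            refine mul_le_mul (Real.exp_le_exp.2 (add_le_add
              (mul_le_mul_of_nonneg_left hz1 (by positivity))
              (mul_le_mul_of_nonneg_left hz2 (by positivity)))) ?_ (norm_nonneg _)
              (Real.exp_pos _).le
            calc ‖f x‖ ≤ Real.exp (-(π * (x.1^2+x.2^2))) * (‖u x‖ + M) := hfx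
              _ = 1 * (Real.exp (-(π * (x.1^2+x.2^2))) * (‖u x‖ + M)) := by ring
              _ ≤ (Real.exp |x.1| * Real.exp |x.2|) *
                  (Real.exp (-(π * (x.1^2+x.2^2))) * (‖u x‖ + M)) :=
                mul_le_mul_of_nonneg_right hone hWnn
        _ = 4 * ((Real.exp (2*π*|x.1| * (‖z₀‖+1) + 2*π*|x.2| * (‖z₀‖+1)) *
              (Real.exp |x.1| * Real.exp |x.2|) * Real.exp (-(π * (x.1^2+x.2^2)))) *
                (‖u x‖ + M)) := by ring
        _ = 4 * ((gau c x.1 * gau c x.2) * (‖u x‖ + M)) := by rw [hprod x]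
        _ ≤ (8*π) * ((gau c x.1 * gau c x.2) * (‖u x‖ + M)) := by
            have h4 : (4:ℝ) ≤ 8*π := by nlinarith [Real.pi_gt_three]
            have hnn : (0:ℝ) ≤ (gau c x.1 * gau c x.2) * (‖u x‖ + M) := by
              have := gau_nonneg c x.1; have := gau_nonneg c x.2
              have : (0:ℝ) ≤ gau c x.1 * gau c x.2 :=
                mul_nonneg (gau_nonneg _ _) (gau_nonneg _ _)
              nlinarith [norm_nonneg (u x)]
            nlinarith
        _ = D x := by rw [hDdef]; ring
    have hGk_int : Integrable (fun x => Gk f z₀ x) volume :=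
      Integrable.mono' hD (Gk_aesm f hmeas z₀) hboundGk
    exact hasFDerivAt_integral_of_dominated_of_fderiv_le (Metric.ball_mem_nhds z₀ one_pos)
      (Filter.Eventually.of_forall fun z => Gk_aesm f hmeas z) hGk_int
      (Gk'_aesm f hmeas z₀) hboundGk' hD
      (Filter.Eventually.of_forall fun x z _ => hasDeriv_term f x z)
  -- integrability of f and of the quaternionic integrand
  have hf_int : Integrable f volume := by
    refine Integrable.mono' (hu.norm.add ((hgg 0 0).const_mul M)) hmeas ?_
    filter_upwards [hvae] with x hvx
    refine (hf_pt x).trans ?_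
    have hgg0 : Real.exp (-(π * (x.1^2+x.2^2))) = gau 0 x.1 * gau 0 x.2 := by
      simp only [gau, ← Real.exp_add]
      congr 1; ring
    have hle1 : Real.exp (-(π * (x.1^2+x.2^2))) ≤ 1 := by
      rw [show (1:ℝ) = Real.exp 0 from (Real.exp_zero).symm]
      apply Real.exp_le_exp.2
      nlinarith [sq_nonneg x.1, sq_nonneg x.2]
    calc Real.exp (-(π * (x.1^2+x.2^2))) * (‖u x‖ + ‖v x‖)
        ≤ Real.exp (-(π * (x.1^2+x.2^2))) * (‖u x‖ + M) := by
          gcongr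
      _ = Real.exp (-(π * (x.1^2+x.2^2))) * ‖u x‖ + Real.exp (-(π * (x.1^2+x.2^2))) * M := by
          ring
      _ ≤ ‖u x‖ + M * (gau 0 x.1 * gau 0 x.2) := by
          have h1 : Real.exp (-(π * (x.1^2+x.2^2))) * ‖u x‖ ≤ ‖u x‖ := by
            nlinarith [norm_nonneg (u x), Real.exp_pos (-(π * (x.1^2+x.2^2)))]
          have h2 : Real.exp (-(π * (x.1^2+x.2^2))) * M = M * (gau 0 x.1 * gau 0 x.2) := by
            rw [← hgg0]; ring
          linarith
  have hqint : ∀ ξ : ℝ × ℝ, Integrable (fun x : ℝ × ℝ =>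
      qexp QI (-(2 * π * ξ.1 * x.1)) * f x * qexp QJ (-(2 * π * ξ.2 * x.2))) volume := by
    intro ξ
    have hxf : AEStronglyMeasurable (fun x : ℝ × ℝ => (x, f x)) volume :=
      aestronglyMeasurable_id.prodMk hmeas
    have hΦ : Continuous fun p : (ℝ × ℝ) × Quaternion ℝ =>
        qexp QI (-(2 * π * ξ.1 * p.1.1)) * p.2 * qexp QJ (-(2 * π * ξ.2 * p.1.2)) := by
      refine Continuous.mul (Continuous.mul ?_ continuous_snd) ?_
      · exact (qexp_cont QI).comp (by fun_prop)
      · exact (qexp_cont QJ).comp (by fun_prop)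
    have hmeasq := (hΦ.comp_aestronglyMeasurable hxf).congr
      (Filter.Eventually.of_forall fun x => rfl)
    refine Integrable.mono' (hf_int.norm.const_mul 4) hmeasq ?_
    filter_upwards with x
    rw [norm_mul, norm_mul]
    have hL : ‖qexp QI (-(2 * π * ξ.1 * x.1))‖ ≤ 2 := by
      have := qexp_norm_le QI (-(2 * π * ξ.1 * x.1)); rw [QI_norm] at this; linarith
    have hR : ‖qexp QJ (-(2 * π * ξ.2 * x.2))‖ ≤ 2 := by
      have := qexp_norm_le QJ (-(2 * π * ξ.2 * x.2)); rw [QJ_norm] at this; linarith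
    calc ‖qexp QI (-(2 * π * ξ.1 * x.1))‖ * ‖f x‖ * ‖qexp QJ (-(2 * π * ξ.2 * x.2))‖
        ≤ 2 * ‖f x‖ * 2 := by
          refine mul_le_mul (mul_le_mul hL le_rfl (norm_nonneg _) (by norm_num)) hR
            (norm_nonneg _) (by positivity)
      _ = 4 * ‖f x‖ := by ring
  -- assemble
  have hu0 : (0:ℝ) ≤ ∫ x : ℝ × ℝ, ‖u x‖ := integral_nonneg fun x => norm_nonneg _
  refine ⟨8*((∫ x : ℝ × ℝ, ‖u x‖) + 4*M) + 1, by nlinarith, fun z => ∫ x : ℝ × ℝ, Gk f z x,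
    fun z₀ => (hdiff z₀).differentiableAt, fun ξ => ?_, fun z => ?_⟩
  · -- matching on real points
    calc (∫ x : ℝ × ℝ, Gk f ((ξ.1:ℂ), (ξ.2:ℂ)) x)
        = ∫ x : ℝ × ℝ, Tlin (qexp QI (-(2 * π * ξ.1 * x.1)) * f x *
            qexp QJ (-(2 * π * ξ.2 * x.2))) := by
          refine integral_congr_ae (Filter.Eventually.of_forall fun x => ?_)
          exact (matching f ξ x).trans (Tlin_eq _).symm
      _ = Tlin (QFT f ξ) := by
          rw [ContinuousLinearMap.integral_comp_comm Tlin (hqint ξ), QFT]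
      _ = ![(((QFT f ξ).re : ℝ) : ℂ), (((QFT f ξ).imI : ℝ) : ℂ),
            (((QFT f ξ).imJ : ℝ) : ℂ), (((QFT f ξ).imK : ℝ) : ℂ)] := rfl
  · -- the growth bound
    have hK := keyF z
    have hsum4 : ∑ i : Fin 4, ‖(∫ x : ℝ × ℝ, Gk f z x) i‖^2
        ≤ 4 * ‖∫ x : ℝ × ℝ, Gk f z x‖^2 := by
      have hterm : ∀ i : Fin 4, ‖(∫ x : ℝ × ℝ, Gk f z x) i‖^2
          ≤ ‖∫ x : ℝ × ℝ, Gk f z x‖^2 :=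
        fun i => pow_le_pow_left₀ (norm_nonneg _) (norm_le_pi_norm _ i) 2
      calc ∑ i : Fin 4, ‖(∫ x : ℝ × ℝ, Gk f z x) i‖^2
          ≤ ∑ _i : Fin 4, ‖∫ x : ℝ × ℝ, Gk f z x‖^2 :=
            Finset.sum_le_sum fun i _ => hterm i
        _ = 4 * ‖∫ x : ℝ × ℝ, Gk f z x‖^2 := by
            rw [Finset.sum_const]
            simp
            try ring
    calc Real.sqrt (∑ i : Fin 4, ‖(∫ x : ℝ × ℝ, Gk f z x) i‖^2)
        ≤ Real.sqrt (4 * ‖∫ x : ℝ × ℝ, Gk f z x‖^2) := Real.sqrt_le_sqrt hsum4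
      _ = 2 * ‖∫ x : ℝ × ℝ, Gk f z x‖ := by
          rw [show (4:ℝ) * ‖∫ x : ℝ × ℝ, Gk f z x‖^2 = (2*‖∫ x : ℝ × ℝ, Gk f z x‖)^2 by ring,
            Real.sqrt_sq (by positivity)]
      _ ≤ 2 * (4 * ((∫ x : ℝ × ℝ, ‖u x‖) + 4*M) * Real.exp (π * (‖z.1‖^2 + ‖z.2‖^2))) := by
          linarith
      _ ≤ (8*((∫ x : ℝ × ℝ, ‖u x‖) + 4*M) + 1) * Real.exp (π * (‖z.1‖^2 + ‖z.2‖^2)) := by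
          nlinarith [Real.exp_pos (π * (‖z.1‖^2 + ‖z.2‖^2))]
end
end

section
/- (Miyachi's theorem for the QFT, subcritical case) Let α, β > 0 with αβ < π². Then there exist infinitely many linearly independent measurable functions f : ℝ² → ℍ such that e^{α|x|²} f ∈ L¹(ℝ²,ℍ) + L^∞(ℝ²,ℍ) and ∫_{ℝ²} log⁺(|ℱ{f}(y)| e^{β|y|²} / ρ) dy < ∞ for some ρ > 0. In particular, for any γ with α/π < γ < π/β and any polynomial P, the function f(x) = P(x) e^{-πγ|x|²} satisfies both conditions. -/
open MeasureTheory Real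

noncomputable section

/-- The two Miyachi conditions for parameters `α β`. -/
def MiyachiCond (α β : ℝ) (f : ℝ × ℝ → Quaternion ℝ) : Prop :=
  AEStronglyMeasurable f volume ∧
  (∃ u v : ℝ × ℝ → Quaternion ℝ, Integrable u ∧ MemLp v ⊤ ∧
    ∀ x : ℝ × ℝ, Real.exp (α * (x.1 ^ 2 + x.2 ^ 2)) • f x = u x + v x) ∧
  ∃ ρ : ℝ, 0 < ρ ∧ Integrable (fun y : ℝ × ℝ =>
    _root_.posLog (‖QFT f y‖ * Real.exp (β * (y.1 ^ 2 + y.2 ^ 2)) / ρ))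

lemma posLog_nonneg (x : ℝ) : 0 ≤ _root_.posLog x := le_max_right _ _

lemma posLog_le_self {x : ℝ} (hx : 0 ≤ x) : _root_.posLog x ≤ x := by
  rcases le_or_gt x 1 with h | h
  · have h1 : Real.log x ≤ 0 := Real.log_nonpos hx h
    simp only [_root_.posLog, max_le_iff]
    exact ⟨h1.trans hx, hx⟩
  · have h0 : (0:ℝ) < x := by linarith
    have h1 : Real.log x ≤ x - 1 := Real.log_le_sub_one_of_pos h0
    simp only [_root_.posLog, max_le_iff]
    constructor <;> linarith

lemma posLog_eq_log_max {x : ℝ} (hx : 0 ≤ x) : _root_.posLog x = Real.log (max x 1) := by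
  rcases le_or_gt x 1 with h | h
  · have h1 : Real.log x ≤ 0 := Real.log_nonpos hx h
    simp [_root_.posLog, max_eq_right h, h1]
  · have h1 : 0 ≤ Real.log x := Real.log_nonneg h.le
    simp [_root_.posLog, max_eq_left h.le, h1]

lemma quat_norm_eq (a : Quaternion ℝ) : ‖a‖ = Real.sqrt (Quaternion.normSq a) := by
  rw [Quaternion.normSq_eq_norm_mul_self, Real.sqrt_mul_self (norm_nonneg _)]

lemma norm_coeComplex (z : ℂ) : ‖(z : Quaternion ℝ)‖ = ‖z‖ := by
  rw [quat_norm_eq, Quaternion.normSq_def']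
  simp only [Quaternion.re_coeComplex, Quaternion.imI_coeComplex, Quaternion.imJ_coeComplex,
    Quaternion.imK_coeComplex]
  rw [Complex.norm_def, Complex.normSq_apply]
  ring_nf

lemma norm_qexp_QI (θ : ℝ) : ‖qexp QI θ‖ = 1 := by
  rw [quat_norm_eq, Quaternion.normSq_def']
  simp [qexp, Quaternion.re_one, Quaternion.imI_one, Quaternion.imJ_one, Quaternion.imK_one, show QI.re = 0 from rfl, show QI.imI = 1 from rfl, show QI.imJ = 0 from rfl, show QI.imK = 0 from rfl]

lemma norm_qexp_QJ (θ : ℝ) : ‖qexp QJ θ‖ = 1 := by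
  rw [quat_norm_eq, Quaternion.normSq_def']
  simp [qexp, Quaternion.re_one, Quaternion.imI_one, Quaternion.imJ_one, Quaternion.imK_one, show QJ.re = 0 from rfl, show QJ.imI = 0 from rfl, show QJ.imJ = 1 from rfl, show QJ.imK = 0 from rfl]

lemma pow_mul_exp_neg_sq_bounded (m : ℕ) {c : ℝ} (hc : 0 < c) :
    ∃ M : ℝ, 0 ≤ M ∧ ∀ t : ℝ, |t|^m * Real.exp (-(c*t^2)) ≤ M := by
  refine ⟨1 + m.factorial / c^m, by positivity, fun t => ?_⟩
  rcases le_or_gt (|t|) 1 with h | h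
  · have h1 : |t|^m ≤ 1 := pow_le_one₀ (abs_nonneg t) h
    have h2 : Real.exp (-(c*t^2)) ≤ 1 := by
      rw [Real.exp_le_one_iff]
      have : 0 ≤ c * t^2 := by positivity
      linarith
    have h3 : |t|^m * Real.exp (-(c*t^2)) ≤ 1 :=
      mul_le_one₀ h1 (Real.exp_pos _).le h2
    have h4 : (0:ℝ) ≤ m.factorial / c^m := by positivity
    linarith
  · have ht0 : (0:ℝ) < |t| := by linarith
    have hx : (0:ℝ) < c * t^2 := by
      have : t ≠ 0 := by intro h0; rw [h0] at h; simp at h; linarith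
      positivity
    have key : (c*t^2)^m / m.factorial ≤ Real.exp (c*t^2) :=
      Real.pow_div_factorial_le_exp (x := c*t^2) hx.le m
    have hpos : (0:ℝ) < (c*t^2)^m / m.factorial := by positivity
    have hinv : Real.exp (-(c*t^2)) ≤ m.factorial / (c*t^2)^m := by
      rw [Real.exp_neg, ← inv_div]
      exact inv_anti₀ hpos key
    have hA : (1:ℝ) ≤ |t|^m := one_le_pow₀ h.le
    have h2 : (t^2)^m = |t|^m * |t|^m := by rw [← sq_abs]; ring
    have step1 : |t|^m * Real.exp (-(c*t^2)) ≤ |t|^m * (m.factorial / (c*t^2)^m) :=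
      mul_le_mul_of_nonneg_left hinv (pow_nonneg (abs_nonneg t) m)
    have step2 : |t|^m * ((m.factorial : ℝ) / (c*t^2)^m) = m.factorial / (c^m * |t|^m) := by
      rw [mul_pow, h2]
      field_simp
    have step3 : (m.factorial : ℝ) / (c^m * |t|^m) ≤ m.factorial / c^m := by
      apply div_le_div_of_nonneg_left (by positivity) (pow_pos hc m)
      exact le_mul_of_one_le_right (pow_pos hc m).le hA
    calc |t|^m * Real.exp (-(c*t^2)) ≤ m.factorial / (c^m * |t|^m) := by rw [← step2]; exact step1
      _ ≤ m.factorial / c^m := step3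
      _ ≤ 1 + m.factorial / c^m := by linarith


open Complex (I)

local notation "cexp" => Complex.exp

-- 1D building blocks
def gR (γ : ℝ) (m : ℕ) : ℝ → ℝ := fun t => t^m * Real.exp (-(π*γ)*t^2)
def gC (γ : ℝ) (m : ℕ) : ℝ → ℂ := fun t => ((gR γ m t : ℝ) : ℂ)

lemma gR_continuous (γ : ℝ) (m : ℕ) : Continuous (gR γ m) := by
  unfold gR; fun_prop

lemma integrable_pow_gauss {c : ℝ} (hc : 0 < c) (m : ℕ) :
    Integrable (fun t : ℝ => t^m * Real.exp (-c*t^2)) := by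
  simpa [Real.rpow_natCast] using
    integrable_rpow_mul_exp_neg_mul_sq hc (s := (m:ℝ))
      (lt_of_lt_of_le neg_one_lt_zero (Nat.cast_nonneg m))

lemma integrable_abs_pow_gauss {c : ℝ} (hc : 0 < c) (m : ℕ) :
    Integrable (fun t : ℝ => |t|^m * Real.exp (-c*t^2)) := by
  have := (integrable_pow_gauss hc m).abs
  refine this.congr ?_
  filter_upwards with t
  rw [abs_mul, abs_pow, Real.abs_exp]

lemma integrable_gR {γ : ℝ} (hγ : 0 < γ) (m : ℕ) : Integrable (gR γ m) := by
  have hb : 0 < π * γ := by positivity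
  have h := integrable_pow_gauss hb m
  unfold gR
  convert h using 3 with t
  try ring

lemma integrable_gC {γ : ℝ} (hγ : 0 < γ) (m : ℕ) : Integrable (gC γ m) :=
  (integrable_gR hγ m).ofReal

lemma gC_smul (γ : ℝ) (m : ℕ) : (fun t : ℝ => t • gC γ m t) = gC γ (m+1) := by
  funext t
  simp only [gC, gR, Complex.real_smul]
  push_cast
  ring

lemma gC_zero (γ : ℝ) : gC γ 0 = fun t : ℝ => cexp (-(π:ℂ) * (γ:ℂ) * (t:ℂ)^2) := by
  funext t
  simp only [gC, gR, pow_zero, one_mul]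
  rw [Complex.ofReal_exp]
  congr 1
  push_cast
  ring

lemma fourier_gauss_poly {γ : ℝ} (hγ : 0 < γ) (m : ℕ) :
    ∃ Q : Polynomial ℂ, ∀ ξ : ℝ,
      FourierTransform.fourier (gC γ m) ξ = Q.eval (ξ:ℂ) * cexp (-((π:ℂ)/(γ:ℂ)) * (ξ:ℂ)^2) := by
  induction m with
  | zero =>
    refine ⟨Polynomial.C (1 / (γ:ℂ) ^ (1/2 : ℂ)), fun ξ => ?_⟩
    rw [gC_zero]
    have h := congrFun (fourier_gaussian_pi (b := (γ:ℂ)) (by simpa using hγ)) ξ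
    simpa [neg_div] using h
  | succ m ih =>
    obtain ⟨Q, hQ⟩ := ih
    have hint : Integrable (gC γ m) := integrable_gC hγ m
    have hint' : Integrable (fun t : ℝ => t • gC γ m t) := by
      rw [gC_smul]; exact integrable_gC hγ (m+1)
    set c : ℂ := -((π:ℂ)/(γ:ℂ)) with hc
    have hQD : ∀ ξ : ℝ, HasDerivAt (fun ξ : ℝ => Q.eval (ξ:ℂ) * cexp (c * (ξ:ℂ)^2))
        (Q.derivative.eval (ξ:ℂ) * cexp (c * (ξ:ℂ)^2)
          + Q.eval (ξ:ℂ) * (c * (2*(ξ:ℂ)) * cexp (c * (ξ:ℂ)^2))) ξ := by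
      intro ξ
      have hp := Q.hasDerivAt (ξ:ℂ)
      have h2 : HasDerivAt (fun z : ℂ => c * z^2) (c * (2*(ξ:ℂ))) (ξ:ℂ) := by
        simpa using (hasDerivAt_pow 2 (ξ:ℂ)).const_mul c
      have he : HasDerivAt (fun z : ℂ => cexp (c * z^2))
          (c * (2*(ξ:ℂ)) * cexp (c*(ξ:ℂ)^2)) (ξ:ℂ) := by
        simpa [mul_comm] using h2.cexp
      exact (hp.mul he).comp_ofReal
    have hfun : FourierTransform.fourier (gC γ m)
        = fun ξ : ℝ => Q.eval (ξ:ℂ) * cexp (c * (ξ:ℂ)^2) := funext hQ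
    refine ⟨Polynomial.C (-2*(π:ℂ)*I)⁻¹ *
      (Q.derivative + Polynomial.C (2*c) * Polynomial.X * Q), fun ξ => ?_⟩
    have hD := Real.hasDerivAt_fourier hint hint' ξ
    rw [hfun] at hD
    have huniq := (hQD ξ).unique hD
    have hrw : (fun x : ℝ => ((-2*(π:ℂ)*I*(x:ℂ))) • gC γ m x)
        = fun x : ℝ => (-2*(π:ℂ)*I) * gC γ (m+1) x := by
      funext x
      have : gC γ (m+1) x = (x:ℂ) * gC γ m x := by
        rw [← gC_smul]; simp [Complex.real_smul]
      rw [this, smul_eq_mul]; ring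
    have hlin : FourierTransform.fourier (fun x : ℝ => (-2*(π:ℂ)*I) * gC γ (m+1) x) ξ
        = (-2*(π:ℂ)*I) * FourierTransform.fourier (gC γ (m+1)) ξ := by
      rw [Real.fourier_real_eq_integral_exp_smul,
        Real.fourier_real_eq_integral_exp_smul]
      simp_rw [smul_eq_mul, mul_left_comm _ (-2*(π:ℂ)*I) _]
      exact MeasureTheory.integral_const_mul _ _
    have hne : (-2*(π:ℂ)*I) ≠ 0 := by
      simp [Real.pi_ne_zero, Complex.I_ne_zero, Complex.ofReal_ne_zero]
    apply mul_left_cancel₀ hne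
    rw [← hlin, ← hrw, ← huniq]
    simp only [Polynomial.eval_mul, Polynomial.eval_C, Polynomial.eval_add, Polynomial.eval_X]
    have h2 : (2:ℂ) ≠ 0 := two_ne_zero
    have hπ : ((π:ℝ):ℂ) ≠ 0 := Complex.ofReal_ne_zero.mpr Real.pi_ne_zero
    field_simp

-- embeddings of ℂ into the quaternions
def coeCLM : ℂ →L[ℝ] Quaternion ℝ :=
  LinearMap.toContinuousLinearMap (Quaternion.ofComplex.toLinearMap)

@[simp] lemma coeCLM_apply (z : ℂ) : coeCLM z = (z : Quaternion ℝ) := rfl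

def jmapL : ℂ →ₗ[ℝ] Quaternion ℝ where
  toFun z := ⟨z.re, 0, z.im, 0⟩
  map_add' z w := by ext <;> simp <;> change _ = _ + _ <;> simp
  map_smul' r z := by ext <;> simp <;> change _ = _ • _ <;> simp

def jCLM : ℂ →L[ℝ] Quaternion ℝ := LinearMap.toContinuousLinearMap jmapL

@[simp] lemma jCLM_apply (z : ℂ) : jCLM z = jmapL z := rfl

lemma jmapL_re (z : ℂ) : (jmapL z).re = z.re := rfl
lemma jmapL_imI (z : ℂ) : (jmapL z).imI = 0 := rfl
lemma jmapL_imJ (z : ℂ) : (jmapL z).imJ = z.im := rfl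
lemma jmapL_imK (z : ℂ) : (jmapL z).imK = 0 := rfl

lemma norm_jmapL (z : ℂ) : ‖jmapL z‖ = ‖z‖ := by
  rw [quat_norm_eq, Quaternion.normSq_def', jmapL_re, jmapL_imI, jmapL_imJ, jmapL_imK,
    Complex.norm_def, Complex.normSq_apply]
  ring_nf

lemma coeC_qexp (θ : ℝ) : ((cexp ((θ:ℂ)*I)) : Quaternion ℝ) = qexp QI θ := by
  ext <;> simp [Complex.exp_ofReal_mul_I_re, Complex.exp_ofReal_mul_I_im, qexp, Quaternion.re_one, Quaternion.imI_one, Quaternion.imJ_one, Quaternion.imK_one, show QI.re = 0 from rfl, show QI.imI = 1 from rfl, show QI.imJ = 0 from rfl, show QI.imK = 0 from rfl]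

lemma jmap_qexp (θ : ℝ) : jmapL (cexp ((θ:ℂ)*I)) = qexp QJ θ := by
  ext
  · rw [jmapL_re, Complex.exp_ofReal_mul_I_re]; simp [qexp, Quaternion.re_one, Quaternion.imI_one, Quaternion.imJ_one, Quaternion.imK_one, show QJ.re = 0 from rfl, show QJ.imI = 0 from rfl, show QJ.imJ = 1 from rfl, show QJ.imK = 0 from rfl]
  · rw [jmapL_imI]; simp [qexp, Quaternion.re_one, Quaternion.imI_one, Quaternion.imJ_one, Quaternion.imK_one, show QJ.re = 0 from rfl, show QJ.imI = 0 from rfl, show QJ.imJ = 1 from rfl, show QJ.imK = 0 from rfl]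
  · rw [jmapL_imJ, Complex.exp_ofReal_mul_I_im]; simp [qexp, Quaternion.re_one, Quaternion.imI_one, Quaternion.imJ_one, Quaternion.imK_one, show QJ.re = 0 from rfl, show QJ.imI = 0 from rfl, show QJ.imJ = 1 from rfl, show QJ.imK = 0 from rfl]
  · rw [jmapL_imK]; simp [qexp, Quaternion.re_one, Quaternion.imI_one, Quaternion.imJ_one, Quaternion.imK_one, show QJ.re = 0 from rfl, show QJ.imI = 0 from rfl, show QJ.imJ = 1 from rfl, show QJ.imK = 0 from rfl]

lemma integrable_gR_smul_cexp {γ : ℝ} (hγ : 0 < γ) (m : ℕ) (ξ : ℝ) :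
    Integrable (fun t : ℝ => gR γ m t • cexp (((-2*π*t*ξ : ℝ):ℂ)*I)) := by
  refine ((integrable_gR hγ m).norm).mono' ?_ ?_
  · apply Continuous.aestronglyMeasurable
    apply Continuous.smul (gR_continuous γ m)
    apply Complex.continuous_exp.comp
    fun_prop
  · filter_upwards with t
    rw [norm_smul]
    have : ‖cexp (((-2*π*t*ξ : ℝ):ℂ)*I)‖ = 1 := by
      rw [Complex.norm_exp]
      simp
    rw [this, mul_one]

lemma intA {γ : ℝ} (hγ : 0 < γ) (m : ℕ) (ξ : ℝ) :
    ∫ t : ℝ, gR γ m t • qexp QI (-2*π*t*ξ)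
      = ((FourierTransform.fourier (gC γ m) ξ : ℂ) : Quaternion ℝ) := by
  rw [Real.fourier_real_eq_integral_exp_smul]
  have h1 : (∫ t : ℝ, cexp (((-2*π*t*ξ : ℝ):ℂ)*I) • gC γ m t)
      = ∫ t : ℝ, gR γ m t • cexp (((-2*π*t*ξ : ℝ):ℂ)*I) := by
    congr 1; funext t
    rw [smul_eq_mul, Complex.real_smul, mul_comm]; rfl
  rw [show (∫ v : ℝ, cexp (((-2*π*v*ξ : ℝ):ℂ)*I) • gC γ m v) = _ from h1]
  rw [← coeCLM_apply, ← ContinuousLinearMap.integral_comp_comm _ (integrable_gR_smul_cexp hγ m ξ)]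
  congr 1; funext t
  rw [_root_.map_smul, coeCLM_apply, coeC_qexp]

lemma intB {γ : ℝ} (hγ : 0 < γ) (m : ℕ) (ξ : ℝ) :
    ∫ t : ℝ, gR γ m t • qexp QJ (-2*π*t*ξ)
      = jmapL (FourierTransform.fourier (gC γ m) ξ) := by
  rw [Real.fourier_real_eq_integral_exp_smul]
  have h1 : (∫ t : ℝ, cexp (((-2*π*t*ξ : ℝ):ℂ)*I) • gC γ m t)
      = ∫ t : ℝ, gR γ m t • cexp (((-2*π*t*ξ : ℝ):ℂ)*I) := by
    congr 1; funext t
    rw [smul_eq_mul, Complex.real_smul, mul_comm]; rfl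
  rw [show (∫ v : ℝ, cexp (((-2*π*v*ξ : ℝ):ℂ)*I) • gC γ m v) = _ from h1]
  rw [← jCLM_apply, ← ContinuousLinearMap.integral_comp_comm _ (integrable_gR_smul_cexp hγ m ξ)]
  congr 1; funext t
  rw [_root_.map_smul, jCLM_apply, jmap_qexp]

lemma continuous_qexp {X : Type*} [TopologicalSpace X] (u : Quaternion ℝ) {h : X → ℝ}
    (hh : Continuous h) : Continuous fun t => qexp u (h t) := by
  unfold qexp
  exact ((Real.continuous_cos.comp hh).smul continuous_const).add
    ((Real.continuous_sin.comp hh).smul continuous_const)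

lemma integrable_gR_smul_qexp {γ : ℝ} (hγ : 0 < γ) (m : ℕ) (u : Quaternion ℝ)
    (hu : ∀ θ, ‖qexp u θ‖ = 1) {h : ℝ → ℝ} (hh : Continuous h) :
    Integrable (fun t : ℝ => gR γ m t • qexp u (h t)) := by
  refine ((integrable_gR hγ m).norm).mono' ?_ ?_
  · exact ((gR_continuous γ m).smul (continuous_qexp u hh)).aestronglyMeasurable
  · filter_upwards with t
    rw [norm_smul, hu, mul_one]

lemma coe_mul_split (r s : ℝ) (a b : Quaternion ℝ) :
    a * ((r * s : ℝ) : Quaternion ℝ) * b = (r • a) * (s • b) := by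
  rw [Quaternion.mul_coe_eq_smul, smul_mul_assoc, smul_mul_assoc, mul_smul_comm, smul_smul]

lemma QFT_mono2 {γ : ℝ} (hγ : 0 < γ) (m n : ℕ) (ξ : ℝ × ℝ) :
    QFT (fun x : ℝ × ℝ => ((gR γ m x.1 * gR γ n x.2 : ℝ) : Quaternion ℝ)) ξ
      = ((FourierTransform.fourier (gC γ m) ξ.1 : ℂ) : Quaternion ℝ)
        * jmapL (FourierTransform.fourier (gC γ n) ξ.2) := by
  have hF : Integrable (fun t : ℝ => gR γ m t • qexp QI (-2*π*t*ξ.1)) :=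
    integrable_gR_smul_qexp hγ m QI norm_qexp_QI (by fun_prop)
  have hG : Integrable (fun t : ℝ => gR γ n t • qexp QJ (-2*π*t*ξ.2)) :=
    integrable_gR_smul_qexp hγ n QJ norm_qexp_QJ (by fun_prop)
  have hpoint : ∀ x : ℝ × ℝ,
      qexp QI (-(2 * π * ξ.1 * x.1)) * ((gR γ m x.1 * gR γ n x.2 : ℝ) : Quaternion ℝ)
          * qexp QJ (-(2 * π * ξ.2 * x.2))
        = (gR γ m x.1 • qexp QI (-2*π*x.1*ξ.1)) * (gR γ n x.2 • qexp QJ (-2*π*x.2*ξ.2)) := by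
    intro x
    rw [coe_mul_split]
    congr 3 <;> ring
  have hprod : Integrable (fun x : ℝ × ℝ =>
      (gR γ m x.1 • qexp QI (-2*π*x.1*ξ.1)) * (gR γ n x.2 • qexp QJ (-2*π*x.2*ξ.2))) := by
    have hb : Integrable (fun x : ℝ × ℝ => |gR γ m x.1| * |gR γ n x.2|) := by
      rw [MeasureTheory.Measure.volume_eq_prod]
      exact ((integrable_gR hγ m).abs).mul_prod ((integrable_gR hγ n).abs)
    refine hb.mono' ?_ ?_
    · apply Continuous.aestronglyMeasurable
      apply Continuous.mul
      · exact ((gR_continuous γ m).comp continuous_fst).smul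
          (continuous_qexp QI (by fun_prop))
      · exact ((gR_continuous γ n).comp continuous_snd).smul
          (continuous_qexp QJ (by fun_prop))
    · filter_upwards with x
      rw [norm_mul, norm_smul, norm_smul, norm_qexp_QI, norm_qexp_QJ, mul_one, mul_one]
      simp
  unfold QFT
  rw [show (fun x : ℝ × ℝ => qexp QI (-(2 * π * ξ.1 * x.1))
      * ((gR γ m x.1 * gR γ n x.2 : ℝ) : Quaternion ℝ) * qexp QJ (-(2 * π * ξ.2 * x.2)))
    = fun x : ℝ × ℝ => (gR γ m x.1 • qexp QI (-2*π*x.1*ξ.1))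
      * (gR γ n x.2 • qexp QJ (-2*π*x.2*ξ.2)) from funext hpoint]
  rw [MeasureTheory.Measure.volume_eq_prod] at hprod
  calc (∫ x : ℝ × ℝ, (gR γ m x.1 • qexp QI (-2*π*x.1*ξ.1))
          * (gR γ n x.2 • qexp QJ (-2*π*x.2*ξ.2)))
      = ∫ x₁ : ℝ, ∫ x₂ : ℝ, (gR γ m x₁ • qexp QI (-2*π*x₁*ξ.1))
          * (gR γ n x₂ • qexp QJ (-2*π*x₂*ξ.2)) := by
        rw [MeasureTheory.Measure.volume_eq_prod]
        exact MeasureTheory.integral_prod _ hprod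
    _ = ∫ x₁ : ℝ, (gR γ m x₁ • qexp QI (-2*π*x₁*ξ.1))
          * ∫ x₂ : ℝ, (gR γ n x₂ • qexp QJ (-2*π*x₂*ξ.2)) := by
        congr 1; funext x₁
        have := (ContinuousLinearMap.mul ℝ (Quaternion ℝ)
          (gR γ m x₁ • qexp QI (-2*π*x₁*ξ.1))).integral_comp_comm hG
        simpa using this
    _ = (∫ x₁ : ℝ, gR γ m x₁ • qexp QI (-2*π*x₁*ξ.1))
          * ∫ x₂ : ℝ, gR γ n x₂ • qexp QJ (-2*π*x₂*ξ.2) := by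
        have := ((ContinuousLinearMap.mul ℝ (Quaternion ℝ)).flip
          (∫ x₂ : ℝ, gR γ n x₂ • qexp QJ (-2*π*x₂*ξ.2))).integral_comp_comm hF
        simpa using this
    _ = _ := by rw [intA hγ m ξ.1, intB hγ n ξ.2]

lemma polyabs_le (Q : Polynomial ℂ) (x : ℝ) :
    ‖Q.eval (x:ℂ)‖ ≤ ∑ k ∈ Finset.range (Q.natDegree+1), ‖Q.coeff k‖ * |x|^k := by
  rw [Polynomial.eval_eq_sum_range]
  refine (norm_sum_le _ _).trans ?_
  refine Finset.sum_le_sum fun k _ => ?_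
  rw [norm_mul, norm_pow, Complex.norm_real, Real.norm_eq_abs]

lemma integrable_polyabs_gauss {ε : ℝ} (hε : 0 < ε) (Q : Polynomial ℂ) :
    Integrable (fun t : ℝ => ‖Q.eval (t:ℂ)‖ * Real.exp (-ε*t^2)) := by
  have hb : Integrable (fun t : ℝ => ∑ k ∈ Finset.range (Q.natDegree+1),
      ‖Q.coeff k‖ * (|t|^k * Real.exp (-ε*t^2))) :=
    integrable_finset_sum _ fun k _ => (integrable_abs_pow_gauss hε k).const_mul _
  refine hb.mono' ?_ ?_
  · apply Continuous.aestronglyMeasurable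
    exact ((Q.continuous.comp Complex.continuous_ofReal).norm).mul (by fun_prop)
  · filter_upwards with t
    rw [Real.norm_eq_abs, abs_mul, abs_of_nonneg (norm_nonneg _), Real.abs_exp]
    calc ‖Q.eval (t:ℂ)‖ * Real.exp (-ε*t^2)
        ≤ (∑ k ∈ Finset.range (Q.natDegree+1), ‖Q.coeff k‖ * |t|^k) * Real.exp (-ε*t^2) :=
          mul_le_mul_of_nonneg_right (polyabs_le Q t) (Real.exp_pos _).le
      _ = _ := by rw [Finset.sum_mul]; exact Finset.sum_congr rfl fun k _ => by ring

lemma quat_coe_sum {ι : Type*} {s : Finset ι} (h : ι → ℝ) :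
    ((∑ d ∈ s, h d : ℝ) : Quaternion ℝ) = ∑ d ∈ s, ((h d : ℝ) : Quaternion ℝ) := by
  classical
  induction s using Finset.induction with
  | empty => simp
  | insert _ _ hnot ih =>
    rw [Finset.sum_insert hnot, Finset.sum_insert hnot, ← ih]
    norm_cast

lemma eval_expand (P : MvPolynomial (Fin 2) ℝ) (γ : ℝ) (x : ℝ × ℝ) :
    ((MvPolynomial.eval ![x.1, x.2] P * Real.exp (-π * γ * (x.1^2 + x.2^2)) : ℝ) : Quaternion ℝ)
      = ∑ d ∈ P.support,
          ((P.coeff d * (gR γ (d 0) x.1 * gR γ (d 1) x.2) : ℝ) : Quaternion ℝ) := by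
  rw [← quat_coe_sum]
  congr 1
  rw [MvPolynomial.eval_eq', Finset.sum_mul]
  refine Finset.sum_congr rfl fun d _ => ?_
  rw [Fin.prod_univ_two]
  simp only [Matrix.cons_val_zero, Matrix.cons_val_one, Matrix.head_cons]
  unfold gR
  rw [show P.coeff d * (x.1 ^ d 0 * Real.exp (-(π*γ)*x.1^2)
      * (x.2 ^ d 1 * Real.exp (-(π*γ)*x.2^2)))
    = P.coeff d * (x.1 ^ d 0 * x.2 ^ d 1)
      * (Real.exp (-(π*γ)*x.1^2) * Real.exp (-(π*γ)*x.2^2)) by ring, ← Real.exp_add]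
  rw [show -(π*γ)*x.1^2 + -(π*γ)*x.2^2 = -π * γ * (x.1^2+x.2^2) by ring]

lemma abs_eval_le (P : MvPolynomial (Fin 2) ℝ) (x : ℝ × ℝ) :
    |MvPolynomial.eval ![x.1, x.2] P|
      ≤ ∑ d ∈ P.support, |P.coeff d| * (|x.1|^(d 0) * |x.2|^(d 1)) := by
  rw [MvPolynomial.eval_eq']
  refine (Finset.abs_sum_le_sum_abs _ _).trans ?_
  refine Finset.sum_le_sum fun d _ => ?_
  rw [abs_mul, Fin.prod_univ_two]
  simp only [Matrix.cons_val_zero, Matrix.cons_val_one, Matrix.head_cons]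
  rw [abs_mul, abs_pow, abs_pow]

lemma integrable_mono2_integrand {γ : ℝ} (hγ : 0 < γ) (m n : ℕ) (ξ : ℝ × ℝ) :
    Integrable (fun x : ℝ × ℝ => qexp QI (-(2 * π * ξ.1 * x.1))
      * ((gR γ m x.1 * gR γ n x.2 : ℝ) : Quaternion ℝ) * qexp QJ (-(2 * π * ξ.2 * x.2))) := by
  have hb : Integrable (fun x : ℝ × ℝ => |gR γ m x.1| * |gR γ n x.2|) := by
    rw [MeasureTheory.Measure.volume_eq_prod]
    exact ((integrable_gR hγ m).abs).mul_prod ((integrable_gR hγ n).abs)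
  refine hb.mono' ?_ ?_
  · apply Continuous.aestronglyMeasurable
    refine Continuous.mul (Continuous.mul ?_ ?_) ?_
    · exact continuous_qexp QI (by fun_prop)
    · exact Quaternion.continuous_coe.comp
        (((gR_continuous γ m).comp continuous_fst).mul ((gR_continuous γ n).comp continuous_snd))
    · exact continuous_qexp QJ (by fun_prop)
  · filter_upwards with x
    rw [norm_mul, norm_mul, norm_qexp_QI, norm_qexp_QJ, one_mul, mul_one,
      Quaternion.norm_coe, Real.norm_eq_abs, abs_mul]

lemma continuous_evalP (P : MvPolynomial (Fin 2) ℝ) :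
    Continuous fun x : ℝ × ℝ => MvPolynomial.eval ![x.1, x.2] P := by
  have hvec : Continuous fun x : ℝ × ℝ => (![x.1, x.2] : Fin 2 → ℝ) := by
    refine continuous_pi fun i => ?_
    fin_cases i
    · simpa using continuous_fst
    · simpa using continuous_snd
  exact (MvPolynomial.continuous_eval (p := P)).comp hvec

lemma miyachi_part2 {α β γ : ℝ} (hα : 0 < α) (hβ : 0 < β)
    (h1 : α / π < γ) (h2 : γ < π / β) (P : MvPolynomial (Fin 2) ℝ) :
    MiyachiCond α β (fun x =>
      (((MvPolynomial.eval ![x.1, x.2] P) * Real.exp (-π * γ * (x.1 ^ 2 + x.2 ^ 2)) : ℝ) :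
        Quaternion ℝ)) := by
  have hπ : (0:ℝ) < π := Real.pi_pos
  have hγ0 : 0 < γ := lt_trans (by positivity) h1
  have hαγ : α < π * γ := by rwa [div_lt_iff₀ hπ, mul_comm] at h1
  have hβγ : β < π / γ := by
    rw [lt_div_iff₀ hγ0]
    rw [lt_div_iff₀ hβ] at h2
    linarith
  set f : ℝ × ℝ → Quaternion ℝ := fun x =>
    (((MvPolynomial.eval ![x.1, x.2] P) * Real.exp (-π * γ * (x.1 ^ 2 + x.2 ^ 2)) : ℝ) :
      Quaternion ℝ) with hf
  have hcont_f : Continuous f := by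
    apply Quaternion.continuous_coe.comp
    exact (continuous_evalP P).mul (by fun_prop)
  refine ⟨hcont_f.aestronglyMeasurable, ?_, ?_⟩
  · -- L¹ + L∞ decomposition
    refine ⟨fun _ => 0, fun x => Real.exp (α * (x.1^2+x.2^2)) • f x,
      integrable_zero _ _ _, ?_, fun x => (zero_add _).symm⟩
    have hε : 0 < π*γ - α := by linarith
    choose Mf hMf0 hMf using fun k : ℕ => pow_mul_exp_neg_sq_bounded k hε
    refine memLp_top_of_bound
      ((Real.continuous_exp.comp (by fun_prop)).smul hcont_f).aestronglyMeasurable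
      (∑ d ∈ P.support, |P.coeff d| * (Mf (d 0) * Mf (d 1))) ?_
    filter_upwards with x
    rw [norm_smul, Real.norm_eq_abs, Real.abs_exp, hf]
    simp only []
    rw [Quaternion.norm_coe, Real.norm_eq_abs, abs_mul, Real.abs_exp]
    have hexp : Real.exp (α*(x.1^2+x.2^2)) * Real.exp (-π*γ*(x.1^2+x.2^2))
        = Real.exp (-((π*γ-α)*x.1^2)) * Real.exp (-((π*γ-α)*x.2^2)) := by
      rw [← Real.exp_add, ← Real.exp_add]; congr 1; ring
    calc Real.exp (α*(x.1^2+x.2^2))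
          * (|MvPolynomial.eval ![x.1,x.2] P| * Real.exp (-π*γ*(x.1^2+x.2^2)))
        = |MvPolynomial.eval ![x.1,x.2] P|
            * (Real.exp (-((π*γ-α)*x.1^2)) * Real.exp (-((π*γ-α)*x.2^2))) := by
          rw [← hexp]; ring
      _ ≤ (∑ d ∈ P.support, |P.coeff d| * (|x.1|^(d 0) * |x.2|^(d 1)))
            * (Real.exp (-((π*γ-α)*x.1^2)) * Real.exp (-((π*γ-α)*x.2^2))) :=
          mul_le_mul_of_nonneg_right (abs_eval_le P x) (by positivity)
      _ = ∑ d ∈ P.support, |P.coeff d| *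
            ((|x.1|^(d 0) * Real.exp (-((π*γ-α)*x.1^2)))
              * (|x.2|^(d 1) * Real.exp (-((π*γ-α)*x.2^2)))) := by
          rw [Finset.sum_mul]
          exact Finset.sum_congr rfl fun d _ => by ring
      _ ≤ ∑ d ∈ P.support, |P.coeff d| * (Mf (d 0) * Mf (d 1)) := by
          refine Finset.sum_le_sum fun d _ => ?_
          refine mul_le_mul_of_nonneg_left ?_ (abs_nonneg _)
          exact mul_le_mul (hMf _ _) (hMf _ _) (by positivity) (hMf0 _)
  · -- log-integrability of the QFT
    refine ⟨1, one_pos, ?_⟩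
    choose Qs hQs using fun k : ℕ => fourier_gauss_poly hγ0 k
    have hnormF : ∀ (k : ℕ) (w : ℝ), ‖FourierTransform.fourier (gC γ k) w‖
        = ‖(Qs k).eval (w:ℂ)‖ * Real.exp (-(π/γ)*w^2) := by
      intro k w
      rw [hQs k w, norm_mul]
      congr 1
      rw [show -((π:ℂ)/(γ:ℂ)) * (w:ℂ)^2 = ((-(π/γ)*w^2 : ℝ) : ℂ) by push_cast; ring]
      rw [Complex.norm_exp_ofReal]
    have hfx : ∀ x : ℝ × ℝ, f x = ∑ d ∈ P.support,
        ((P.coeff d * (gR γ (d 0) x.1 * gR γ (d 1) x.2) : ℝ) : Quaternion ℝ) :=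
      fun x => eval_expand P γ x
    have hQFT : ∀ ξ : ℝ × ℝ, QFT f ξ = ∑ d ∈ P.support,
        P.coeff d • (((FourierTransform.fourier (gC γ (d 0)) ξ.1 : ℂ) : Quaternion ℝ)
          * jmapL (FourierTransform.fourier (gC γ (d 1)) ξ.2)) := by
      intro ξ
      unfold QFT
      have hintg : ∀ x : ℝ × ℝ,
          qexp QI (-(2 * π * ξ.1 * x.1)) * f x * qexp QJ (-(2 * π * ξ.2 * x.2))
          = ∑ d ∈ P.support, P.coeff d •
              (qexp QI (-(2 * π * ξ.1 * x.1))
                * ((gR γ (d 0) x.1 * gR γ (d 1) x.2 : ℝ) : Quaternion ℝ)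
                * qexp QJ (-(2 * π * ξ.2 * x.2))) := by
        intro x
        rw [hfx x, Finset.mul_sum, Finset.sum_mul]
        refine Finset.sum_congr rfl fun d _ => ?_
        rw [show ((P.coeff d * (gR γ (d 0) x.1 * gR γ (d 1) x.2) : ℝ) : Quaternion ℝ)
            = P.coeff d • ((gR γ (d 0) x.1 * gR γ (d 1) x.2 : ℝ) : Quaternion ℝ) from by
          rw [Quaternion.smul_coe]]
        rw [mul_smul_comm, smul_mul_assoc]
      rw [show (fun x : ℝ×ℝ => qexp QI (-(2 * π * ξ.1 * x.1)) * f x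
          * qexp QJ (-(2 * π * ξ.2 * x.2))) = _ from funext hintg]
      rw [MeasureTheory.integral_finset_sum]
      · refine Finset.sum_congr rfl fun d _ => ?_
        rw [MeasureTheory.integral_smul]
        congr 1
        exact QFT_mono2 hγ0 (d 0) (d 1) ξ
      · exact fun d _ => ((integrable_mono2_integrand hγ0 (d 0) (d 1) ξ).smul
          (P.coeff d)).congr (by filter_upwards with x; rfl)
    set Bnd : ℝ × ℝ → ℝ := fun ξ => ∑ d ∈ P.support, |P.coeff d| *
        ((‖(Qs (d 0)).eval (ξ.1:ℂ)‖ * Real.exp (-(π/γ)*ξ.1^2))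
          * (‖(Qs (d 1)).eval (ξ.2:ℂ)‖ * Real.exp (-(π/γ)*ξ.2^2))) with hBnd
    have hQFTle : ∀ ξ : ℝ × ℝ, ‖QFT f ξ‖ ≤ Bnd ξ := by
      intro ξ
      rw [hQFT ξ]
      refine (norm_sum_le _ _).trans ?_
      refine Finset.sum_le_sum fun d _ => ?_
      rw [norm_smul, Real.norm_eq_abs, norm_mul, norm_coeComplex, norm_jmapL,
        hnormF, hnormF]
    have hFcont : ∀ k : ℕ, Continuous (FourierTransform.fourier (gC γ k)) := by
      intro k
      rw [show FourierTransform.fourier (gC γ k) = fun w : ℝ => (Qs k).eval (w:ℂ)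
          * Complex.exp (-((π:ℂ)/(γ:ℂ)) * (w:ℂ)^2) from funext (hQs k)]
      exact ((Qs k).continuous.comp Complex.continuous_ofReal).mul
        (Complex.continuous_exp.comp (continuous_const.mul (Complex.continuous_ofReal.pow 2)))
    have hQFTcont : Continuous (QFT f) := by
      rw [show QFT f = _ from funext hQFT]
      refine continuous_finset_sum _ fun d _ => ?_
      apply Continuous.fun_const_smul
      refine Continuous.mul ?_ ?_
      · exact coeCLM.continuous.comp ((hFcont (d 0)).comp continuous_fst)
      · exact jCLM.continuous.comp ((hFcont (d 1)).comp continuous_snd)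
    have hε2 : 0 < π/γ - β := by linarith
    have hIntBnd : Integrable (fun ξ : ℝ × ℝ => Bnd ξ * Real.exp (β*(ξ.1^2+ξ.2^2))) := by
      have h1d : ∀ k : ℕ,
          Integrable (fun t : ℝ => ‖(Qs k).eval (t:ℂ)‖ * Real.exp (-(π/γ - β)*t^2)) :=
        fun k => integrable_polyabs_gauss hε2 (Qs k)
      have hrw : (fun ξ : ℝ × ℝ => Bnd ξ * Real.exp (β*(ξ.1^2+ξ.2^2)))
          = fun ξ : ℝ × ℝ => ∑ d ∈ P.support, |P.coeff d| *
              ((‖(Qs (d 0)).eval (ξ.1:ℂ)‖ * Real.exp (-(π/γ-β)*ξ.1^2))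
                * (‖(Qs (d 1)).eval (ξ.2:ℂ)‖ * Real.exp (-(π/γ-β)*ξ.2^2))) := by
        funext ξ
        rw [hBnd, Finset.sum_mul]
        refine Finset.sum_congr rfl fun d _ => ?_
        rw [show Real.exp (-(π/γ-β)*ξ.1^2)
            = Real.exp (-(π/γ)*ξ.1^2) * Real.exp (β*ξ.1^2) by rw [← Real.exp_add]; congr 1; ring]
        rw [show Real.exp (-(π/γ-β)*ξ.2^2)
            = Real.exp (-(π/γ)*ξ.2^2) * Real.exp (β*ξ.2^2) by rw [← Real.exp_add]; congr 1; ring]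
        rw [show Real.exp (β*(ξ.1^2+ξ.2^2))
            = Real.exp (β*ξ.1^2) * Real.exp (β*ξ.2^2) by rw [← Real.exp_add]; congr 1; ring]
        ring
      rw [hrw]
      refine integrable_finset_sum _ fun d _ => ?_
      refine Integrable.const_mul ?_ _
      rw [MeasureTheory.Measure.volume_eq_prod]
      exact (h1d (d 0)).mul_prod (h1d (d 1))
    have hA : ∀ y : ℝ×ℝ, 0 ≤ ‖QFT f y‖ * Real.exp (β*(y.1^2+y.2^2)) / 1 := fun y => by positivity
    refine Integrable.mono' hIntBnd ?_ ?_
    · have hrw2 : (fun y : ℝ×ℝ => _root_.posLog (‖QFT f y‖ * Real.exp (β*(y.1^2+y.2^2)) / 1))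
          = fun y => Real.log (max (‖QFT f y‖ * Real.exp (β*(y.1^2+y.2^2)) / 1) 1) := by
        funext y; exact _root_.posLog_eq_log_max (hA y)
      rw [hrw2]
      apply Continuous.aestronglyMeasurable
      refine Continuous.log ?_ ?_
      · exact (((hQFTcont.norm).mul (by fun_prop)).div_const 1).max continuous_const
      · intro y; exact ne_of_gt (lt_of_lt_of_le one_pos (le_max_right _ 1))
    · filter_upwards with y
      rw [Real.norm_eq_abs, abs_of_nonneg (_root_.posLog_nonneg _)]
      refine (_root_.posLog_le_self (hA y)).trans ?_
      rw [div_one]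
      exact mul_le_mul_of_nonneg_right (hQFTle y) (Real.exp_pos _).le


theorem miyachi_subcritical (α β : ℝ) (hα : 0 < α) (hβ : 0 < β) (hαβ : α * β < π ^ 2) :
    (∃ S : Set (ℝ × ℝ → Quaternion ℝ), S.Infinite ∧
      LinearIndependent ℝ (fun g : S => (g : ℝ × ℝ → Quaternion ℝ)) ∧
      ∀ f ∈ S, MiyachiCond α β f) ∧
    (∀ γ : ℝ, α / π < γ → γ < π / β → ∀ P : MvPolynomial (Fin 2) ℝ,
      MiyachiCond α β (fun x =>
        (((MvPolynomial.eval ![x.1, x.2] P) * Real.exp (-π * γ * (x.1 ^ 2 + x.2 ^ 2)) : ℝ) :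
          Quaternion ℝ))) := by
  have hπ : (0:ℝ) < π := Real.pi_pos
  constructor
  · -- infinitely many linearly independent examples
    have hord : α / π < π / β := by
      rw [div_lt_div_iff₀ hπ hβ]
      nlinarith [hαβ]
    set γ₀ : ℝ := (α/π + π/β)/2 with hγ₀
    have hgl : α / π < γ₀ := by rw [hγ₀]; linarith
    have hgr : γ₀ < π / β := by rw [hγ₀]; linarith
    set F : ℕ → (ℝ × ℝ → Quaternion ℝ) := fun n => fun x =>
      (((MvPolynomial.eval ![x.1, x.2] (MvPolynomial.X 0 ^ n))
        * Real.exp (-π * γ₀ * (x.1 ^ 2 + x.2 ^ 2)) : ℝ) : Quaternion ℝ) with hF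
    have hFval : ∀ (n : ℕ) (t : ℝ), F n (t, 0)
        = ((t^n * Real.exp (-π * γ₀ * t^2) : ℝ) : Quaternion ℝ) := by
      intro n t
      rw [hF]
      simp only [map_pow, MvPolynomial.eval_X, Matrix.cons_val_zero]
      norm_num
    have hLI : LinearIndependent ℝ F := by
      rw [linearIndependent_iff']
      intro s g hsum i hi
      have hzero : ∀ t : ℝ, (∑ j ∈ s, g j * t ^ j) = 0 := by
        intro t
        have h0 := congrFun hsum (t, 0)
        simp only [Finset.sum_apply, Pi.smul_apply, Pi.zero_apply] at h0
        set E : ℝ := Real.exp (-π * γ₀ * t^2) with hE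
        have h1 : ∀ j ∈ s, g j • F j (t, 0) = ((g j * (t^j * E) : ℝ) : Quaternion ℝ) := by
          intro j _
          rw [hFval j t, Quaternion.smul_coe]
        rw [Finset.sum_congr rfl h1, ← quat_coe_sum] at h0
        have h2 : (∑ j ∈ s, g j * (t^j * E)) = 0 := by
          have := Quaternion.coe_injective (R := ℝ)
          apply this
          rw [h0]; norm_num
        have h3 : (∑ j ∈ s, g j * t ^ j) * E = 0 := by
          rw [Finset.sum_mul, ← h2]
          exact Finset.sum_congr rfl fun j _ => by ring
        have hE0 : E ≠ 0 := Real.exp_ne_zero _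
        exact (mul_eq_zero.mp h3).resolve_right hE0
      set p : Polynomial ℝ := ∑ j ∈ s, Polynomial.C (g j) * Polynomial.X ^ j with hp
      have hpeval : ∀ t : ℝ, p.eval t = ∑ j ∈ s, g j * t ^ j := by
        intro t
        rw [hp, Polynomial.eval_finset_sum]
        exact Finset.sum_congr rfl fun j _ => by
          rw [Polynomial.eval_mul, Polynomial.eval_C, Polynomial.eval_pow, Polynomial.eval_X]
      have hp0 : p = 0 := by
        apply Polynomial.funext
        intro t
        rw [hpeval t, hzero t, Polynomial.eval_zero]
      have hco := congrArg (fun q : Polynomial ℝ => q.coeff i) hp0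
      simp only [hp, Polynomial.finset_sum_coeff, Polynomial.coeff_C_mul,
        Polynomial.coeff_X_pow, Polynomial.coeff_zero, mul_ite, mul_one, mul_zero] at hco
      rwa [Finset.sum_ite_eq s i g, if_pos hi] at hco
    have hInj : Function.Injective F := hLI.injective
    refine ⟨Set.range F, Set.infinite_range_of_injective hInj, hLI.linearIndepOn_id, ?_⟩
    rintro f ⟨n, rfl⟩
    exact miyachi_part2 hα hβ hgl hgr (MvPolynomial.X 0 ^ n)
  · intro γ hg1 hg2 P
    exact miyachi_part2 hα hβ hg1 hg2 P
end
end
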